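/- arXiv:1603.02458 — 6 statements merged into one kernel-verified Lean document; each statement's English description precedes it below -/
import Mathlib

section
/- (Proposition 1) Consider the time-delay reset control system obtained by connecting a linear plant P (with minimal state-space realization ẋ_p = A_p x_p + B_p u_p, y_p = C_p x_p, x_p ∈ ℝ^{n_p}) in feedback with a PI+RI controller with gains k_p, k_i and reset ratio p_r ∈ [0,1], through a delay h > 0 (u_p(t) = y_r(t), u_r(t) = −y_p(t−h)), with resets occurring at the instants of a reset sequence {t_k}. If the associated sampled-data system Ẋ(t) = Λ X(t) + Λ_d X(t−h) + Λ K X(t_k) for t ∈ (t_k, t_{k+1}], X = φ_X on [−h,0], is exponentially stable with decay rate α > 0 (for every ε > 0 there exists δ > 0 such that ‖φ_X‖_W < δ implies ‖X(t)‖ < ε e^{−αt} for all t ≥ 0, for every solution X), then the reset control system ẋ(t) = A x(t) + A_d x(t−h) between reset instants, x(t_k⁺) = A_R x(t_k) at the reset instants, x = φ on [−h,0], is exponentially stable with decay rate α (for every ε > 0 there exists δ > 0 such that ‖φ‖_W < δ implies ‖x(t)‖ < ε e^{−αt} for all t ≥ 0, for every solution x). -/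
open MeasureTheory Set Filter Matrix

noncomputable section

/-- `φ` (with density `φ'`) belongs to `W[-h,0]`: `φ` is absolutely continuous on `[-h,0]`
with square-integrable derivative `φ'`. -/
def InW {ι : Type*} [Fintype ι] (h : ℝ) (φ φ' : ℝ → EuclideanSpace ℝ ι) : Prop :=
  (∀ θ ∈ Icc (-h) (0 : ℝ), φ θ = φ (-h) + ∫ s in (-h)..θ, φ' s) ∧
    IntegrableOn φ' (Icc (-h) (0 : ℝ)) ∧
    IntegrableOn (fun s => ‖φ' s‖ ^ 2) (Icc (-h) (0 : ℝ))

/-- The norm on `W[-h,0]`: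
`‖φ‖_W = max_{θ∈[−h,0]} ‖φ(θ)‖ + (∫_{−h}^0 ‖φ̇(θ)‖² dθ)^{1/2}`. -/
def Wnorm {ι : Type*} [Fintype ι] (h : ℝ) (φ φ' : ℝ → EuclideanSpace ℝ ι) : ℝ :=
  (⨆ θ : Icc (-h) (0 : ℝ), ‖φ θ.1‖) + (∫ s in (-h)..0, ‖φ' s‖ ^ 2) ^ (1/2 : ℝ)

/-- A reset sequence: a strictly increasing sequence `{t_k}` with `t 0 = 0`,
inter-reset times in `[Tm, TM]`, and `t k → ∞`. -/
def IsResetSeq (Tm TM : ℝ) (t : ℕ → ℝ) : Prop :=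
  StrictMono t ∧ t 0 = 0 ∧ (∀ k, t (k + 1) - t k ∈ Icc Tm TM) ∧ Tendsto t atTop atTop

/-- `X` is a solution of the sampled-data system
`Ẋ(t) = Λ X(t) + Λ_d X(t−h) + Λ K X(t_k)` on `(t_k, t_{k+1}]`, with initial condition `φ`
on `[−h,0]`: `X` is continuous and satisfies the delay ODE on each inter-sample interval. -/
def IsSampledSol {ι : Type*} [Fintype ι] (Λ Λd K : Matrix ι ι ℝ) (h : ℝ) (t : ℕ → ℝ)
    (φ X : ℝ → EuclideanSpace ℝ ι) : Prop :=
  ContinuousOn X (Ici (-h)) ∧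
  (∀ θ ∈ Icc (-h) (0 : ℝ), X θ = φ θ) ∧
  (∀ k : ℕ, ∀ τ ∈ Ioo (t k) (t (k + 1)),
    HasDerivAt X
      ((WithLp.toLp 2 (Λ.mulVec (X τ) + Λd.mulVec (X (τ - h)) + (Λ * K).mulVec (X (t k))) :
        EuclideanSpace ℝ ι)) τ)

/-- `x` is a solution of the reset control system
`ẋ(t) = A x(t) + A_d x(t−h)` between reset instants, `x(t_k⁺) = A_R x(t_k)` at the reset
instants, with initial condition `φ` on `[−h,0]`: `x` is left-continuous on each
inter-reset interval, satisfies the delay ODE there, and jumps to `A_R x(t_k)` at `t_k`. -/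
def IsResetSol {ι : Type*} [Fintype ι] (A Ad AR : Matrix ι ι ℝ) (h : ℝ) (t : ℕ → ℝ)
    (φ x : ℝ → EuclideanSpace ℝ ι) : Prop :=
  (∀ θ ∈ Icc (-h) (0 : ℝ), x θ = φ θ) ∧
  (∀ k : ℕ, ContinuousOn x (Ioc (t k) (t (k + 1)))) ∧
  (∀ k : ℕ, ∀ τ ∈ Ioo (t k) (t (k + 1)),
    HasDerivAt x (WithLp.toLp 2 (A.mulVec (x τ) + Ad.mulVec (x (τ - h))) : EuclideanSpace ℝ ι) τ) ∧
  (∀ k : ℕ, Tendsto x (nhdsWithin (t k) (Ioi (t k)))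
    (nhds (WithLp.toLp 2 (AR.mulVec (x (t k))) : EuclideanSpace ℝ ι)))

namespace Prop1Aux

def gmap (np : ℕ) : Fin np ⊕ Fin 1 → Fin np ⊕ Fin 2 := Sum.map id (fun _ => 0)

/-- The linear projection `(x_p, x_i, x_ri) ↦ (x_p, x_i)`. -/
def Pl (np : ℕ) : EuclideanSpace ℝ (Fin np ⊕ Fin 2) →ₗ[ℝ] EuclideanSpace ℝ (Fin np ⊕ Fin 1) where
  toFun v := (WithLp.toLp 2 (fun c => v (gmap np c)) : EuclideanSpace ℝ (Fin np ⊕ Fin 1))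
  map_add' v w := by ext c; simp [gmap]
  map_smul' a v := by ext c; simp [gmap]

def P (np : ℕ) : EuclideanSpace ℝ (Fin np ⊕ Fin 2) →L[ℝ] EuclideanSpace ℝ (Fin np ⊕ Fin 1) :=
  LinearMap.toContinuousLinearMap (Pl np)

variable {np : ℕ}

@[simp] lemma P_apply_inl (v : EuclideanSpace ℝ (Fin np ⊕ Fin 2)) (i : Fin np) :
    P np v (Sum.inl i) = v (Sum.inl i) := rfl

@[simp] lemma P_apply_inr (v : EuclideanSpace ℝ (Fin np ⊕ Fin 2)) (j : Fin 1) :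
    P np v (Sum.inr j) = v (Sum.inr 0) := rfl

lemma add_apply2 (f g : EuclideanSpace ℝ (Fin np ⊕ Fin 2)) (c : Fin np ⊕ Fin 2) :
    (f + g) c = f c + g c := rfl

lemma add_apply1 (f g : EuclideanSpace ℝ (Fin np ⊕ Fin 1)) (c : Fin np ⊕ Fin 1) :
    (f + g) c = f c + g c := rfl

lemma coord_abs_le_norm {ι : Type*} [Fintype ι] (v : EuclideanSpace ℝ ι) (i : ι) :
    |v i| ≤ ‖v‖ := by
  rw [EuclideanSpace.norm_eq]
  have h1 : |v i| = Real.sqrt (‖v i‖ ^ 2) := by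
    rw [Real.sqrt_sq_eq_abs, Real.norm_eq_abs, abs_abs]
  rw [h1]
  exact Real.sqrt_le_sqrt (Finset.single_le_sum (f := fun j => ‖v j‖ ^ 2)
    (fun j _ => sq_nonneg _) (Finset.mem_univ i))

lemma norm_P_le (v : EuclideanSpace ℝ (Fin np ⊕ Fin 2)) : ‖P np v‖ ≤ ‖v‖ := by
  rw [EuclideanSpace.norm_eq, EuclideanSpace.norm_eq]
  apply Real.sqrt_le_sqrt
  rw [Fintype.sum_sum_type, Fintype.sum_sum_type]
  simp only [P_apply_inl, P_apply_inr]
  have h2 : (∑ j : Fin 1, ‖v (Sum.inr 0)‖ ^ 2) ≤ ∑ j : Fin 2, ‖v (Sum.inr j)‖ ^ 2 := by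
    rw [Finset.sum_const]
    simp only [Finset.card_univ, Fintype.card_fin, one_smul]
    exact Finset.single_le_sum (f := fun j : Fin 2 => ‖v (Sum.inr j)‖ ^ 2)
      (fun j _ => sq_nonneg _) (Finset.mem_univ 0)
  linarith [le_refl (∑ i : Fin np, ‖v (Sum.inl i)‖ ^ 2)]

lemma norm_le_P_add (v : EuclideanSpace ℝ (Fin np ⊕ Fin 2)) :
    ‖v‖ ≤ ‖P np v‖ + |v (Sum.inr 1)| := by
  rw [EuclideanSpace.norm_eq, EuclideanSpace.norm_eq]
  have key : (∑ c : Fin np ⊕ Fin 2, ‖v c‖ ^ 2)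
      = (∑ c : Fin np ⊕ Fin 1, ‖P np v c‖ ^ 2) + ‖v (Sum.inr 1)‖ ^ 2 := by
    rw [Fintype.sum_sum_type, Fintype.sum_sum_type]
    simp only [P_apply_inl, P_apply_inr]
    rw [Fin.sum_univ_two, Fin.sum_univ_one]
    ring
  rw [key]
  have hb : Real.sqrt ((∑ c : Fin np ⊕ Fin 1, ‖P np v c‖ ^ 2) + ‖v (Sum.inr 1)‖ ^ 2)
      ≤ Real.sqrt ((Real.sqrt (∑ c : Fin np ⊕ Fin 1, ‖P np v c‖ ^ 2) + |v (Sum.inr 1)|) ^ 2) := by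
    apply Real.sqrt_le_sqrt
    have h1 : 0 ≤ ∑ c : Fin np ⊕ Fin 1, ‖P np v c‖ ^ 2 :=
      Finset.sum_nonneg fun _ _ => sq_nonneg _
    have h2 := Real.sq_sqrt h1
    have h3 : 0 ≤ Real.sqrt (∑ c : Fin np ⊕ Fin 1, ‖P np v c‖ ^ 2) * |v (Sum.inr 1)| :=
      mul_nonneg (Real.sqrt_nonneg _) (abs_nonneg _)
    have h4 : ‖v (Sum.inr 1)‖ ^ 2 = |v (Sum.inr 1)| ^ 2 := by rw [Real.norm_eq_abs]
    nlinarith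
  rw [Real.sqrt_sq (by positivity)] at hb
  exact hb

variable (Ap : Matrix (Fin np) (Fin np) ℝ) (Bp : Matrix (Fin np) (Fin 1) ℝ)
  (Cp : Matrix (Fin 1) (Fin np) ℝ) (kp ki pr : ℝ)

lemma deriv_coord_eq (w u : EuclideanSpace ℝ (Fin np ⊕ Fin 2)) :
    (WithLp.toLp 2 ((Matrix.fromBlocks Ap (Bp * !![1 - pr, pr]) 0 0).mulVec w
      + (Matrix.fromBlocks (-(kp • (Bp * Cp))) 0 (-((ki • !![(1:ℝ); 1]) * Cp)) 0).mulVec u)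
      : EuclideanSpace ℝ (Fin np ⊕ Fin 2)) (Sum.inr 1)
    = (WithLp.toLp 2 ((Matrix.fromBlocks Ap (Bp * !![1 - pr, pr]) 0 0).mulVec w
      + (Matrix.fromBlocks (-(kp • (Bp * Cp))) 0 (-((ki • !![(1:ℝ); 1]) * Cp)) 0).mulVec u)
      : EuclideanSpace ℝ (Fin np ⊕ Fin 2)) (Sum.inr 0) := by
  simp [Matrix.mulVec, dotProduct, Fintype.sum_sum_type,
    Matrix.fromBlocks_apply₂₁, Matrix.fromBlocks_apply₂₂, Matrix.mul_apply]

lemma AR_mulVec_inr1 (v : EuclideanSpace ℝ (Fin np ⊕ Fin 2)) :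
    (WithLp.toLp 2 ((Matrix.fromBlocks 1 0 0 !![(1:ℝ), 0; 0, 0]).mulVec v)
      : EuclideanSpace ℝ (Fin np ⊕ Fin 2)) (Sum.inr 1) = 0 := by
  simp [Matrix.mulVec, dotProduct, Fintype.sum_sum_type,
    Matrix.fromBlocks_apply₂₁, Matrix.fromBlocks_apply₂₂, Fin.sum_univ_two]

lemma AR_mulVec_inr0 (v : EuclideanSpace ℝ (Fin np ⊕ Fin 2)) :
    (WithLp.toLp 2 ((Matrix.fromBlocks 1 0 0 !![(1:ℝ), 0; 0, 0]).mulVec v)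
      : EuclideanSpace ℝ (Fin np ⊕ Fin 2)) (Sum.inr 0) = v (Sum.inr 0) := by
  simp [Matrix.mulVec, dotProduct, Fintype.sum_sum_type,
    Matrix.fromBlocks_apply₂₁, Matrix.fromBlocks_apply₂₂, Fin.sum_univ_two]

lemma P_AR (v : EuclideanSpace ℝ (Fin np ⊕ Fin 2)) :
    P np (WithLp.toLp 2 ((Matrix.fromBlocks 1 0 0 !![(1:ℝ), 0; 0, 0]).mulVec v)
      : EuclideanSpace ℝ (Fin np ⊕ Fin 2)) = P np v := by
  ext c
  cases c with
  | inl i =>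
    show (WithLp.toLp 2 ((Matrix.fromBlocks 1 0 0 !![(1:ℝ), 0; 0, 0]).mulVec v)) (Sum.inl i) = v (Sum.inl i)
    simp [Matrix.mulVec, dotProduct, Fintype.sum_sum_type,
      Matrix.fromBlocks_apply₁₁, Matrix.fromBlocks_apply₁₂, Matrix.one_apply, Fin.sum_univ_two]
  | inr j =>
    show (WithLp.toLp 2 ((Matrix.fromBlocks 1 0 0 !![(1:ℝ), 0; 0, 0]).mulVec v)) (Sum.inr 0) = v (Sum.inr 0)
    simp [Matrix.mulVec, dotProduct, Fintype.sum_sum_type,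
      Matrix.fromBlocks_apply₂₁, Matrix.fromBlocks_apply₂₂, Fin.sum_univ_two]

lemma P_rhs_eq (w u z : EuclideanSpace ℝ (Fin np ⊕ Fin 2))
    (hw : w (Sum.inr 1) = w (Sum.inr 0) - z (Sum.inr 0)) :
    P np (WithLp.toLp 2 ((Matrix.fromBlocks Ap (Bp * !![1 - pr, pr]) 0 0).mulVec w
      + (Matrix.fromBlocks (-(kp • (Bp * Cp))) 0 (-((ki • !![(1:ℝ); 1]) * Cp)) 0).mulVec u)
      : EuclideanSpace ℝ (Fin np ⊕ Fin 2))
    = (WithLp.toLp 2 ((Matrix.fromBlocks Ap Bp 0 0).mulVec (P np w)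
      + (Matrix.fromBlocks (-(kp • (Bp * Cp))) 0 (-(ki • Cp)) 0).mulVec (P np u)
      + ((Matrix.fromBlocks Ap Bp 0 0)
          * (Matrix.fromBlocks 0 0 0 (-(pr • (1 : Matrix (Fin 1) (Fin 1) ℝ))))).mulVec (P np z))
      : EuclideanSpace ℝ (Fin np ⊕ Fin 1)) := by
  ext c
  have hPc : ∀ (v : EuclideanSpace ℝ (Fin np ⊕ Fin 2)) (c : Fin np ⊕ Fin 1),
      P np v c = v (gmap np c) := fun _ _ => rfl
  rw [hPc]
  simp only [WithLp.ofLp_toLp, Pi.add_apply]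
  cases c with
  | inl i =>
    simp only [gmap, Sum.map_inl, id_eq]
    simp [Matrix.mulVec, dotProduct, Fintype.sum_sum_type,
      Matrix.fromBlocks_apply₁₁, Matrix.fromBlocks_apply₁₂, Matrix.fromBlocks_apply₂₁,
      Matrix.fromBlocks_apply₂₂, Matrix.mul_apply, Fin.sum_univ_one, Fin.sum_univ_two,
      hw, Matrix.one_apply, mul_sub, mul_add, sub_mul, add_mul]
    ring
  | inr j =>
    obtain rfl : j = 0 := Subsingleton.elim j 0
    simp only [gmap, Sum.map_inr]
    simp [Matrix.mulVec, Matrix.vecMul, dotProduct, Fintype.sum_sum_type,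
      Matrix.fromBlocks_apply₁₁, Matrix.fromBlocks_apply₁₂, Matrix.fromBlocks_apply₂₁,
      Matrix.fromBlocks_apply₂₂, Matrix.mul_apply, Fin.sum_univ_one, Fin.sum_univ_two,
      Matrix.one_apply]

end Prop1Aux

/-- Proposition 1: if the sampled-data system associated to the PI+RI time-delay reset
control loop is exponentially stable with decay rate `α`, then the reset control system
is exponentially stable with decay rate `α`. -/
theorem proposition1
    (np : ℕ) (Ap : Matrix (Fin np) (Fin np) ℝ) (Bp : Matrix (Fin np) (Fin 1) ℝ)
    (Cp : Matrix (Fin 1) (Fin np) ℝ)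
    (kp ki pr h α Tm TM : ℝ) (hpr : pr ∈ Icc (0 : ℝ) 1) (hh : 0 < h) (hα : 0 < α)
    (hTm : 0 ≤ Tm) (hTM : Tm ≤ TM)
    (t : ℕ → ℝ) (ht : IsResetSeq Tm TM t)
    -- exponential stability of the sampled-data system (state `(x_p, x_s)`,
    -- matrices `Λ = [[A_p, B_p],[0,0]]`, `Λ_d = [[−k_p B_p C_p, 0],[−k_i C_p, 0]]`,
    -- `K = [[0,0],[0,−p_r]]`)
    (hstab : ∀ ε > (0:ℝ), ∃ δ > (0:ℝ),
      ∀ φX φX' X : ℝ → EuclideanSpace ℝ (Fin np ⊕ Fin 1),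
        InW h φX φX' → Wnorm h φX φX' < δ →
        IsSampledSol (Matrix.fromBlocks Ap Bp 0 0)
          (Matrix.fromBlocks (-(kp • (Bp * Cp))) 0 (-(ki • Cp)) 0)
          (Matrix.fromBlocks 0 0 0 (-(pr • (1 : Matrix (Fin 1) (Fin 1) ℝ)))) h t φX X →
        ∀ s : ℝ, 0 ≤ s → ‖X s‖ < ε * Real.exp (-(α * s))) :
    -- exponential stability of the reset control system (state `(x_p, x_i, x_ri)`,
    -- matrices `A = [[A_p, B_p C_r],[0,0]]`, `A_d = [[−k_p B_p C_p, 0],[−B_r C_p, 0]]`,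
    -- `A_R = diag(I, 1, 0)`, with `B_r = k_i (1,1)ᵀ`, `C_r = [1−p_r, p_r]`)
    ∀ ε > (0:ℝ), ∃ δ > (0:ℝ),
      ∀ φ φ' x : ℝ → EuclideanSpace ℝ (Fin np ⊕ Fin 2),
        InW h φ φ' → Wnorm h φ φ' < δ →
        IsResetSol (Matrix.fromBlocks Ap (Bp * !![1 - pr, pr]) 0 0)
          (Matrix.fromBlocks (-(kp • (Bp * Cp))) 0 (-((ki • !![(1:ℝ); 1]) * Cp)) 0)
          (Matrix.fromBlocks 1 0 0 !![(1:ℝ), 0; 0, 0]) h t φ x →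
        ∀ s : ℝ, 0 ≤ s → ‖x s‖ < ε * Real.exp (-(α * s)) := by
  classical
  obtain ⟨hmono, ht0, hTk, htop⟩ := ht
  intro ε hε
  set C : ℝ := 2 + Real.exp (α * TM) with hCdef
  have hC : (0:ℝ) < C := by positivity
  obtain ⟨δ, hδ, hst⟩ := hstab (ε / C) (by positivity)
  refine ⟨min δ ε, lt_min hδ hε, ?_⟩
  intro φ φ' x hφW hφn hsol s hs
  obtain ⟨hφeq, hxcont, hxderiv, hjump⟩ := hsol
  have htk0 : ∀ k, 0 ≤ t k := fun k => ht0 ▸ hmono.monotone (Nat.zero_le k)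
  -- find the inter-reset interval containing a positive time
  have hfind : ∀ a : ℝ, 0 < a → ∃ k, a ∈ Ioc (t k) (t (k + 1)) := by
    intro a ha
    have hex : ∃ n, a ≤ t n := (htop.eventually_ge_atTop a).exists
    have hn : a ≤ t (Nat.find hex) := Nat.find_spec hex
    have hn0 : Nat.find hex ≠ 0 := by
      intro h0
      rw [h0, ht0] at hn; linarith
    obtain ⟨m, hm⟩ := Nat.exists_eq_succ_of_ne_zero hn0
    refine ⟨m, ?_, ?_⟩
    · by_contra hcon
      push_neg at hcon
      exact Nat.find_min hex (by omega) hcon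
    · rw [hm] at hn
      exact hn
  -- basic facts on the initial condition
  have hφint : IntegrableOn φ' (Icc (-h) 0) := hφW.2.1
  have huIcc : uIcc (-h) (0:ℝ) = Icc (-h) 0 := uIcc_of_le (by linarith)
  have hφcont : ContinuousOn φ (Icc (-h) 0) := by
    have h1 : ContinuousOn (fun θ => φ (-h) + ∫ s in (-h)..θ, φ' s) (Icc (-h) 0) := by
      apply continuousOn_const.add
      have h2 := intervalIntegral.continuousOn_primitive_interval
        (a := -h) (b := (0:ℝ)) (f := φ') (μ := volume) (by rw [huIcc]; exact hφint)
      rwa [huIcc] at h2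
    exact h1.congr hφW.1
  haveI : Nonempty (Icc (-h) (0:ℝ)) := ⟨⟨0, by constructor <;> linarith⟩⟩
  have hbdd : BddAbove (range fun θ : Icc (-h) (0:ℝ) => ‖φ θ.1‖) := by
    obtain ⟨M, hM⟩ := (isCompact_Icc.image_of_continuousOn hφcont.norm).bddAbove
    refine ⟨M, ?_⟩
    rintro y ⟨θ, rfl⟩
    exact hM ⟨θ.1, θ.2, rfl⟩
  have hsup0 : ∀ θ ∈ Icc (-h) (0:ℝ), ‖φ θ‖ ≤ Wnorm h φ φ' := by
    intro θ hθ
    have h2 : (0:ℝ) ≤ (∫ s in (-h)..0, ‖φ' s‖ ^ 2) ^ (1/2 : ℝ) := by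
      apply Real.rpow_nonneg
      apply intervalIntegral.integral_nonneg (by linarith)
      intro u hu; positivity
    have h1 : ‖φ θ‖ ≤ ⨆ θ : Icc (-h) (0:ℝ), ‖φ θ.1‖ := le_ciSup hbdd ⟨θ, hθ⟩
    unfold Wnorm
    linarith
  -- the projected candidate sampled-data solution
  set Φ : ℝ → EuclideanSpace ℝ (Fin np ⊕ Fin 1) := fun θ => Prop1Aux.P np (φ θ) with hΦdef
  set Φ' : ℝ → EuclideanSpace ℝ (Fin np ⊕ Fin 1) := fun θ => Prop1Aux.P np (φ' θ) with hΦ'def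
  set X : ℝ → EuclideanSpace ℝ (Fin np ⊕ Fin 1) := fun s => Prop1Aux.P np (x s) with hXdef
  have hPcont : Continuous (Prop1Aux.P np) := (Prop1Aux.P np).continuous
  -- square integrability of the projected density
  have hΦ'sq : IntegrableOn (fun s => ‖Φ' s‖ ^ 2) (Icc (-h) (0:ℝ)) := by
    have hmeas : AEStronglyMeasurable Φ' (volume.restrict (Icc (-h) (0:ℝ))) :=
      hPcont.comp_aestronglyMeasurable hφint.aestronglyMeasurable
    apply Integrable.mono' hφW.2.2
      (((continuous_pow 2).comp continuous_norm).comp_aestronglyMeasurable hmeas)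
    apply ae_of_all
    intro a
    have h1 : ‖Φ' a‖ ≤ ‖φ' a‖ := Prop1Aux.norm_P_le _
    have h2 : (0:ℝ) ≤ ‖Φ' a‖ ^ 2 := by positivity
    simp only [Function.comp_apply]
    rw [Real.norm_of_nonneg h2]
    exact pow_le_pow_left₀ (norm_nonneg _) h1 2
  -- membership in W
  have hΦW : InW h Φ Φ' := by
    refine ⟨?_, ?_, hΦ'sq⟩
    · intro θ hθ
      have hii : IntervalIntegrable φ' volume (-h) θ := by
        apply IntegrableOn.intervalIntegrable
        apply hφint.mono_set
        rw [uIcc_of_le hθ.1]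
        exact Icc_subset_Icc le_rfl hθ.2
      calc Φ θ = Prop1Aux.P np (φ (-h) + ∫ s in (-h)..θ, φ' s) := by
            simp only [hΦdef]; rw [hφW.1 θ hθ]
        _ = Φ (-h) + ∫ s in (-h)..θ, Φ' s := by
            rw [map_add, ← (Prop1Aux.P np).intervalIntegral_comp_comm hii]
    · exact (Prop1Aux.P np).integrable_comp hφint
  -- comparison of W-norms
  have hWle : Wnorm h Φ Φ' ≤ Wnorm h φ φ' := by
    unfold Wnorm
    apply add_le_add
    · apply ciSup_le
      intro θ
      exact le_trans (Prop1Aux.norm_P_le _) (le_ciSup hbdd θ)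
    · apply Real.rpow_le_rpow
      · apply intervalIntegral.integral_nonneg (by linarith)
        intro u hu; positivity
      · apply intervalIntegral.integral_mono_on (by linarith)
        · apply IntegrableOn.intervalIntegrable; rw [huIcc]; exact hΦ'sq
        · apply IntegrableOn.intervalIntegrable; rw [huIcc]; exact hφW.2.2
        · intro u hu
          exact pow_le_pow_left₀ (norm_nonneg _) (Prop1Aux.norm_P_le _) 2
      · norm_num
  -- the key structural identity along the reset solution
  have hkey : ∀ k, ∀ τ ∈ Ioc (t k) (t (k + 1)),
      x τ (Sum.inr 1) = x τ (Sum.inr 0) - x (t k) (Sum.inr 0) := by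
    intro k τ hτ
    set D : EuclideanSpace ℝ (Fin np ⊕ Fin 2) →L[ℝ] ℝ :=
      EuclideanSpace.proj (Sum.inr 1 : Fin np ⊕ Fin 2)
        - EuclideanSpace.proj (Sum.inr 0 : Fin np ⊕ Fin 2) with hDdef
    have hDapp : ∀ v : EuclideanSpace ℝ (Fin np ⊕ Fin 2),
        D v = v (Sum.inr 1) - v (Sum.inr 0) := fun v => rfl
    have hgconst : ∀ σ ∈ Ioc (t k) τ, D (x σ) = D (x τ) := by
      intro σ hσ
      rcases eq_or_lt_of_le hσ.2 with he | hl
      · rw [he]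
      · have hsub1 : Icc σ τ ⊆ Ioc (t k) (t (k + 1)) := fun y hy =>
          ⟨lt_of_lt_of_le hσ.1 hy.1, le_trans hy.2 hτ.2⟩
        have hcont' : ContinuousOn (fun s => D (x s)) (Icc σ τ) :=
          D.continuous.comp_continuousOn ((hxcont k).mono hsub1)
        have hder : ∀ y ∈ Ico σ τ, HasDerivWithinAt (fun s => D (x s)) 0 (Ici y) y := by
          intro y hy
          have hyIoo : y ∈ Ioo (t k) (t (k + 1)) :=
            ⟨lt_of_lt_of_le hσ.1 hy.1, lt_of_lt_of_le hy.2 hτ.2⟩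
          have hd := hxderiv k y hyIoo
          have h1 : HasDerivAt (fun s => D (x s))
              (D ((WithLp.toLp 2 ((Matrix.fromBlocks Ap (Bp * !![1 - pr, pr]) 0 0).mulVec (x y)
                + (Matrix.fromBlocks (-(kp • (Bp * Cp))) 0
                    (-((ki • !![(1:ℝ); 1]) * Cp)) 0).mulVec (x (y - h)))
                : EuclideanSpace ℝ (Fin np ⊕ Fin 2)))) y :=
            D.hasFDerivAt.comp_hasDerivAt y hd
          have hz : D ((WithLp.toLp 2 ((Matrix.fromBlocks Ap (Bp * !![1 - pr, pr]) 0 0).mulVec (x y)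
                + (Matrix.fromBlocks (-(kp • (Bp * Cp))) 0
                    (-((ki • !![(1:ℝ); 1]) * Cp)) 0).mulVec (x (y - h)))
                : EuclideanSpace ℝ (Fin np ⊕ Fin 2))) = 0 := by
            rw [hDapp, Prop1Aux.deriv_coord_eq, sub_self]
          rw [hz] at h1
          exact h1.hasDerivWithinAt
        have hconst := constant_of_has_deriv_right_zero hcont' hder τ ⟨hl.le, le_rfl⟩
        exact hconst.symm
    have hlim1 : Tendsto (fun s => D (x s)) (nhdsWithin (t k) (Ioi (t k)))
        (nhds (- x (t k) (Sum.inr 0))) := by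
      have h1 := (D.continuous.tendsto _).comp (hjump k)
      have hval : D ((WithLp.toLp 2 ((Matrix.fromBlocks 1 0 0 !![(1:ℝ), 0; 0, 0]).mulVec (x (t k)))
          : EuclideanSpace ℝ (Fin np ⊕ Fin 2))) = - x (t k) (Sum.inr 0) := by
        rw [hDapp, Prop1Aux.AR_mulVec_inr1, Prop1Aux.AR_mulVec_inr0]
        ring
      rwa [hval] at h1
    have hlim2 : Tendsto (fun s => D (x s)) (nhdsWithin (t k) (Ioi (t k)))
        (nhds (D (x τ))) := by
      apply Tendsto.congr' ?_ (tendsto_const_nhds (α := ℝ))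
      filter_upwards [Ioo_mem_nhdsGT_of_mem (⟨le_rfl, hτ.1⟩ : t k ∈ Ico (t k) τ)] with σ hσ
      exact (hgconst σ ⟨hσ.1, hσ.2.le⟩).symm
    have huniq := tendsto_nhds_unique hlim2 hlim1
    have h2 := hDapp (x τ)
    rw [huniq] at h2
    linarith
  -- continuity of the projected solution
  have hXcont : ContinuousOn X (Ici (-h)) := by
    intro a ha
    have hXeqφ : ∀ θ ∈ Icc (-h) (0:ℝ), X θ = Prop1Aux.P np (φ θ) := by
      intro θ hθ
      simp only [hXdef]
      rw [hφeq θ hθ]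
    rcases lt_trichotomy a 0 with h0 | h0 | h0
    · rw [← continuousWithinAt_inter (Iio_mem_nhds h0)]
      apply ContinuousWithinAt.mono (t := Icc (-h) 0)
      · have hc : ContinuousWithinAt (fun θ => Prop1Aux.P np (φ θ)) (Icc (-h) 0) a :=
          (hPcont.comp_continuousOn hφcont) a ⟨ha, h0.le⟩
        exact hc.congr hXeqφ (hXeqφ a ⟨ha, h0.le⟩)
      · exact fun y hy => ⟨hy.1, hy.2.le⟩
    · subst h0
      apply ContinuousWithinAt.mono (t := Icc (-h) 0 ∪ Ioi 0)
      · apply ContinuousWithinAt.union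
        · have hc : ContinuousWithinAt (fun θ => Prop1Aux.P np (φ θ)) (Icc (-h) 0) 0 :=
            (hPcont.comp_continuousOn hφcont) 0 ⟨by linarith, le_rfl⟩
          exact hc.congr hXeqφ (hXeqφ 0 ⟨by linarith, le_rfl⟩)
        · have hj := hjump 0
          rw [ht0] at hj
          have h1 := (hPcont.tendsto _).comp hj
          rw [Prop1Aux.P_AR] at h1
          exact h1
      · intro y hy
        rcases le_or_gt y 0 with h1 | h1
        · exact Or.inl ⟨hy, h1⟩
        · exact Or.inr h1
    · obtain ⟨k, hk⟩ := hfind a h0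
      rcases lt_or_eq_of_le hk.2 with hlt | heq
      · have hca : ContinuousAt x a :=
          (hxcont k).continuousAt (mem_of_superset (Ioo_mem_nhds hk.1 hlt) Ioo_subset_Ioc_self)
        exact (hPcont.continuousAt.comp hca).continuousWithinAt
      · rw [← continuousWithinAt_inter (Ioi_mem_nhds hk.1)]
        apply ContinuousWithinAt.mono (t := Ioc (t k) a ∪ Ioi a)
        · apply ContinuousWithinAt.union
          · have hc := (hxcont k) a (by rw [← heq] at hk ⊢; exact ⟨hk.1, le_rfl⟩)
            have h1 := hPcont.continuousAt.comp_continuousWithinAt hc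
            rw [← heq] at h1
            exact h1
          · have hj := hjump (k + 1)
            rw [← heq] at hj
            have h1 := (hPcont.tendsto _).comp hj
            rw [Prop1Aux.P_AR] at h1
            exact h1
        · intro y hy
          rcases le_or_gt y a with h1 | h1
          · exact Or.inl ⟨hy.2, h1⟩
          · exact Or.inr h1
  -- the projected solution is a sampled-data solution
  have hXsol : IsSampledSol (Matrix.fromBlocks Ap Bp 0 0)
      (Matrix.fromBlocks (-(kp • (Bp * Cp))) 0 (-(ki • Cp)) 0)
      (Matrix.fromBlocks 0 0 0 (-(pr • (1 : Matrix (Fin 1) (Fin 1) ℝ)))) h t Φ X := by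
    refine ⟨hXcont, ?_, ?_⟩
    · intro θ hθ
      simp only [hXdef, hΦdef]
      rw [hφeq θ hθ]
    · intro k τ hτ
      have hd := hxderiv k τ hτ
      have h1 : HasDerivAt X (Prop1Aux.P np
          ((WithLp.toLp 2 ((Matrix.fromBlocks Ap (Bp * !![1 - pr, pr]) 0 0).mulVec (x τ)
            + (Matrix.fromBlocks (-(kp • (Bp * Cp))) 0
                (-((ki • !![(1:ℝ); 1]) * Cp)) 0).mulVec (x (τ - h)))
            : EuclideanSpace ℝ (Fin np ⊕ Fin 2)))) τ :=
        (Prop1Aux.P np).hasFDerivAt.comp_hasDerivAt τ hd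
      have h2 := Prop1Aux.P_rhs_eq Ap Bp Cp kp ki pr (x τ) (x (τ - h)) (x (t k))
        (hkey k τ ⟨hτ.1, hτ.2.le⟩)
      rw [h2] at h1
      exact h1
  -- apply the sampled-data stability
  have hX := hst Φ Φ' X hΦW
    (lt_of_le_of_lt hWle (lt_of_lt_of_le hφn (min_le_left _ _))) hXsol
  rcases eq_or_lt_of_le hs with he | hpos
  · -- s = 0
    have hmem0 : (0:ℝ) ∈ Icc (-h) (0:ℝ) := ⟨by linarith, le_rfl⟩
    rw [← he]
    have h1 : ‖x 0‖ ≤ Wnorm h φ φ' := by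
      rw [hφeq 0 hmem0]
      exact hsup0 0 hmem0
    have h2 : Wnorm h φ φ' < ε := lt_of_lt_of_le hφn (min_le_right _ _)
    have h3 : ε * Real.exp (-(α * 0)) = ε := by
      rw [mul_zero, neg_zero, Real.exp_zero, mul_one]
    rw [h3]
    exact lt_of_le_of_lt h1 h2
  · -- s > 0
    obtain ⟨k, hk⟩ := hfind s hpos
    have hks := hkey k s hk
    have e1 : ‖x s‖ ≤ ‖X s‖ + |x s (Sum.inr 1)| := Prop1Aux.norm_le_P_add (x s)
    have e2 : |x s (Sum.inr 1)| ≤ |x s (Sum.inr 0)| + |x (t k) (Sum.inr 0)| := by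
      rw [hks]
      exact abs_sub _ _
    have e3 : |x s (Sum.inr 0)| ≤ ‖X s‖ := by
      have h1 : x s (Sum.inr 0) = X s (Sum.inr 0) := rfl
      rw [h1]
      exact Prop1Aux.coord_abs_le_norm (X s) (Sum.inr 0)
    have e4 : |x (t k) (Sum.inr 0)| ≤ ‖X (t k)‖ := by
      have h1 : x (t k) (Sum.inr 0) = X (t k) (Sum.inr 0) := rfl
      rw [h1]
      exact Prop1Aux.coord_abs_le_norm (X (t k)) (Sum.inr 0)
    have hXs := hX s hs
    have hXtk := hX (t k) (htk0 k)
    have hexp : Real.exp (-(α * t k)) ≤ Real.exp (α * TM) * Real.exp (-(α * s)) := by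
      rw [← Real.exp_add]
      apply Real.exp_le_exp.2
      have h5 : s ≤ t k + TM := by
        have h6 := (hTk k).2
        have h7 := hk.2
        linarith
      nlinarith
    have hεC : (0:ℝ) < ε / C := by positivity
    have step2 : ε / C * Real.exp (-(α * t k))
        ≤ ε / C * (Real.exp (α * TM) * Real.exp (-(α * s))) :=
      mul_le_mul_of_nonneg_left hexp hεC.le
    have hsum : 2 * (ε / C * Real.exp (-(α * s)))
        + ε / C * (Real.exp (α * TM) * Real.exp (-(α * s))) = ε * Real.exp (-(α * s)) := by
      rw [hCdef]
      field_simp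
    have : ‖x s‖ < 2 * (ε / C * Real.exp (-(α * s))) + ε / C * Real.exp (-(α * t k)) := by
      linarith
    linarith
end
end

section
/- (Proposition 2) Let α > 0, 0 ≤ 𝒯_m ≤ 𝒯_M, and consider the sampled-data system Ẋ(t) = Λ X(t) + Λ_d X(t−h) + Λ K X(t_k) for t ∈ (t_k, t_{k+1}], X = φ_X ∈ W[−h,0] on [−h,0], with reset sequence {t_k}. For a solution X, define the lifted function χ_k(τ,θ) = X(t_k + τ + θ) for τ ∈ [0,T_k], θ ∈ [−h,0]. Suppose there exist a functional V : W[−h,0] → ℝ and positive scalars μ₁, μ₂ with μ₁‖φ(0)‖² ≤ V(φ) ≤ μ₂‖φ‖²_W for all φ ∈ W[−h,0], and for each k a functional 𝒱_k(τ, χ_k) defined for τ ∈ [0,T_k], and a scalar η ≥ 0, such that: (i) e^{2αT_k} 𝒱_k(T_k, χ_k) = 𝒱_k(0, χ_k); (ii) 𝒱_k(0, χ_k) ≤ η V(χ_k(0,·)); (iii) −η V(χ_k(0,·)) ≤ e^{2ατ} 𝒱_k(τ, χ_k) for all τ ∈ [0,T_k]; (iv) the map σ ↦ e^{2ασ}(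 V(χ_k(σ,·)) + 𝒱_k(σ, χ_k) ) is differentiable with nonpositive derivative for all σ ∈ [0,T_k]. Then the sampled-data system is exponentially stable with decay rate α: for every ε > 0 there exists δ > 0 such that ‖φ_X‖_W < δ implies ‖X(t)‖ < ε e^{−αt} for all t ≥ 0, for any reset instants satisfying the reset sequence assumptions. -/
open MeasureTheory Set Filter Matrix

noncomputable section

noncomputable def matCLM {n : ℕ} (M : Matrix (Fin n) (Fin n) ℝ) :
    EuclideanSpace ℝ (Fin n) →L[ℝ] EuclideanSpace ℝ (Fin n) :=
  LinearMap.toContinuousLinearMap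
    { toFun := fun v => (WithLp.toLp 2 (M.mulVec v) : EuclideanSpace ℝ (Fin n))
      map_add' := fun x y => by
        ext i
        exact congrFun (Matrix.mulVec_add M x y) i
      map_smul' := fun c x => by
        ext i
        exact congrFun (Matrix.mulVec_smul M c x) i }

lemma matCLM_apply {n : ℕ} (M : Matrix (Fin n) (Fin n) ℝ) (v : EuclideanSpace ℝ (Fin n)) :
    matCLM M v = (WithLp.toLp 2 (M.mulVec v) : EuclideanSpace ℝ (Fin n)) := rfl

lemma seg_exists_deriv {n : ℕ} {Λ Λd K : Matrix (Fin n) (Fin n) ℝ} {h Tm TM : ℝ} (hh : 0 < h)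
    {t : ℕ → ℝ} (ht : IsResetSeq Tm TM t)
    {φX φX' X : ℝ → EuclideanSpace ℝ (Fin n)} (hφ : InW h φX φX')
    (hX : IsSampledSol Λ Λd K h t φX X) :
    ∃ D : ℝ → EuclideanSpace ℝ (Fin n),
      (∀ u, u < 0 → D u = φX' u) ∧
      ∀ s : ℝ, 0 ≤ s → InW h (fun θ => X (s + θ)) (fun u => D (s + u)) := by
  classical
  obtain ⟨htm, ht0, hTk, htop⟩ := ht
  obtain ⟨hXc, hXφ, hXd⟩ := hX
  have hne0 : ∀ᵐ u : ℝ, u ≠ (0:ℝ) := by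
    refine ae_iff.2 ?_
    simp only [not_not]
    have : {u : ℝ | u = 0} = {0} := by ext u; simp
    rw [this]
    exact measure_singleton 0
  have ht_nonneg : ∀ k, 0 ≤ t k := fun k => ht0 ▸ htm.monotone (Nat.zero_le k)
  have hXeq : ∀ θ ∈ Icc (-h) (0:ℝ), X θ = X (-h) + ∫ u in (-h)..θ, φX' u := by
    intro θ hθ
    rw [hXφ θ hθ, hXφ (-h) ⟨le_rfl, by linarith⟩]
    exact hφ.1 θ hθ
  have hφii : ∀ a b : ℝ, -h ≤ a → a ≤ b → b ≤ 0 → IntervalIntegrable φX' volume a b := by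
    intro a b ha hab hb
    rw [intervalIntegrable_iff_integrableOn_Icc_of_le hab]
    exact hφ.2.1.mono_set (Icc_subset_Icc ha hb)
  have hex : ∀ τ : ℝ, ∃ k, τ < t (k + 1) := by
    intro τ
    obtain ⟨N, hN⟩ := (htop.eventually (eventually_gt_atTop τ)).exists
    exact ⟨N, lt_of_lt_of_le hN (htm.monotone (Nat.le_succ N))⟩
  set idx : ℝ → ℕ := fun τ => Nat.find (hex τ) with hidxdef
  have idx_lt : ∀ τ, τ < t (idx τ + 1) := fun τ => Nat.find_spec (hex τ)
  have idx_mono : Monotone idx := by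
    intro a b hab
    exact Nat.find_mono (fun k hk => lt_of_le_of_lt hab hk)
  have idx_le : ∀ τ, 0 ≤ τ → t (idx τ) ≤ τ := by
    intro τ hτ
    rcases Nat.eq_zero_or_pos (idx τ) with h0 | hpos
    · rw [h0, ht0]; exact hτ
    · obtain ⟨m, hm⟩ := Nat.exists_eq_succ_of_ne_zero hpos.ne'
      have := Nat.find_min (hex τ) (show m < idx τ by omega)
      rw [hm]; exact not_lt.mp this
  have idx_eq : ∀ k, ∀ τ ∈ Ico (t k) (t (k + 1)), idx τ = k := by
    intro k τ hτ
    refine le_antisymm (Nat.find_le hτ.2) ?_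
    by_contra hlt
    push_neg at hlt
    have h1 : idx τ + 1 ≤ k := hlt
    have := htm.monotone h1
    exact absurd (idx_lt τ) (not_lt.mpr (this.trans hτ.1))
  -- the extension Y of X
  set Y : ℝ → EuclideanSpace ℝ (Fin n) := fun u => X (max u (-h)) with hYdef
  have hYc : Continuous Y :=
    hXc.comp_continuous (continuous_id.max continuous_const) (fun x => mem_Ici.2 (le_max_right _ _))
  have hYX : ∀ u, -h ≤ u → Y u = X u := fun u hu => by
    simp only [hYdef, max_eq_left hu]
  -- the vector field G
  set A₁ := matCLM Λ with hA₁
  set A₂ := matCLM Λd with hA₂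
  set A₃ := matCLM (Λ * K) with hA₃
  set G : ℝ → EuclideanSpace ℝ (Fin n) :=
    fun u => A₁ (Y u) + A₂ (Y (u - h)) + A₃ (Y (t (idx u))) with hGdef
  have hGm : Measurable G := by
    have hYm : Measurable Y := hYc.measurable
    have m1 : Measurable fun u => A₁ (Y u) := A₁.continuous.measurable.comp hYm
    have m2 : Measurable fun u : ℝ => A₂ (Y (u - h)) :=
      A₂.continuous.measurable.comp (hYm.comp (measurable_id.sub measurable_const))
    have m3 : Measurable fun u : ℝ => A₃ (Y (t (idx u))) :=
      A₃.continuous.measurable.comp (hYm.comp (measurable_from_top.comp idx_mono.measurable))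
    exact (m1.add m2).add m3
  have hGint : ∀ b : ℝ, 0 ≤ b → IntegrableOn G (Icc 0 b) ∧
      IntegrableOn (fun u => ‖G u‖ ^ 2) (Icc 0 b) := by
    intro b hb
    obtain ⟨C, hC⟩ := (isCompact_Icc : IsCompact (Icc (-h) b)).exists_bound_of_continuousOn
      hYc.continuousOn
    set C' := max C 0 with hC'
    have hC'0 : 0 ≤ C' := le_max_right _ _
    have hCb : ∀ x ∈ Icc (-h) b, ‖Y x‖ ≤ C' := fun x hx => (hC x hx).trans (le_max_left _ _)
    set M := ‖A₁‖ * C' + ‖A₂‖ * C' + ‖A₃‖ * C' with hM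
    have hM0 : 0 ≤ M := by positivity
    have hGb : ∀ u ∈ Icc (0:ℝ) b, ‖G u‖ ≤ M := by
      intro u hu
      have h1 : u ∈ Icc (-h) b := ⟨by linarith [hu.1], hu.2⟩
      have h2 : u - h ∈ Icc (-h) b := ⟨by linarith [hu.1], by linarith [hu.2]⟩
      have h3 : t (idx u) ∈ Icc (-h) b := ⟨by linarith [ht_nonneg (idx u)],
        (idx_le u hu.1).trans hu.2⟩
      calc ‖G u‖ ≤ ‖A₁ (Y u)‖ + ‖A₂ (Y (u - h))‖ + ‖A₃ (Y (t (idx u)))‖ :=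
            norm_add₃_le
        _ ≤ ‖A₁‖ * C' + ‖A₂‖ * C' + ‖A₃‖ * C' := by
            gcongr <;>
              [exact (A₁.le_opNorm _).trans (by gcongr; exact hCb _ h1);
               exact (A₂.le_opNorm _).trans (by gcongr; exact hCb _ h2);
               exact (A₃.le_opNorm _).trans (by gcongr; exact hCb _ h3)]
    constructor
    · refine Measure.integrableOn_of_bounded (M := M) (by simp) hGm.aestronglyMeasurable ?_
      exact (ae_restrict_mem measurableSet_Icc).mono fun u hu => hGb u hu
    · refine Measure.integrableOn_of_bounded (M := M ^ 2) (by simp)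
        ((hGm.norm.pow_const 2).aestronglyMeasurable) ?_
      refine (ae_restrict_mem measurableSet_Icc).mono fun u hu => ?_
      rw [Real.norm_of_nonneg (by positivity)]
      exact pow_le_pow_left₀ (norm_nonneg _) (hGb u hu) 2
  have hGii : ∀ a b : ℝ, 0 ≤ a → a ≤ b → IntervalIntegrable G volume a b := by
    intro a b ha hab
    rw [intervalIntegrable_iff_integrableOn_Icc_of_le hab]
    exact (hGint b (ha.trans hab)).1.mono_set (Icc_subset_Icc ha le_rfl)
  -- FTC on pieces
  have piece : ∀ k, ∀ b ∈ Icc (t k) (t (k + 1)), ∫ u in (t k)..b, G u = X b - X (t k) := by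
    intro k b hb
    refine intervalIntegral.integral_eq_sub_of_hasDerivAt_of_le hb.1
      (hXc.mono ?_) ?_ (hGii (t k) b (ht_nonneg k) hb.1)
    · intro x hx
      have := hx.1
      simp only [mem_Ici]
      linarith [ht_nonneg k, hh]
    · intro x hx
      have hx' : x ∈ Ioo (t k) (t (k + 1)) := ⟨hx.1, lt_of_lt_of_le hx.2 hb.2⟩
      have hd := hXd k x hx'
      have h0x : (0:ℝ) ≤ x := le_trans (ht_nonneg k) hx'.1.le
      have hidxx : idx x = k := idx_eq k x ⟨hx'.1.le, hx'.2⟩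
      have hGx : G x = (WithLp.toLp 2 (Λ.mulVec (X x) + Λd.mulVec (X (x - h)) + (Λ * K).mulVec (X (t k))) :
          EuclideanSpace ℝ (Fin n)) := by
        rw [hGdef]
        simp only [hidxx]
        rw [hYX x (by linarith), hYX (x - h) (by linarith), hYX (t k) (by linarith [ht_nonneg k]),
          hA₁, hA₂, hA₃, matCLM_apply, matCLM_apply, matCLM_apply, WithLp.toLp_add, WithLp.toLp_add]
      rw [hGx]
      exact hd
  have FTC0 : ∀ k, ∀ b ∈ Icc (t k) (t (k + 1)), ∫ u in (0:ℝ)..b, G u = X b - X 0 := by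
    intro k
    induction k with
    | zero =>
      intro b hb
      have := piece 0 b hb
      rwa [ht0] at this
    | succ k ih =>
      intro b hb
      have h1 := ih (t (k + 1)) ⟨(htm (Nat.lt_succ_self k)).le, le_rfl⟩
      have h2 := piece (k + 1) b hb
      have hadd := intervalIntegral.integral_add_adjacent_intervals
        (hGii 0 (t (k + 1)) le_rfl (ht_nonneg _)) (hGii (t (k + 1)) b (ht_nonneg _) hb.1)
      rw [← hadd, h1, h2]
      abel
  have FTCpos : ∀ b : ℝ, 0 ≤ b → ∫ u in (0:ℝ)..b, G u = X b - X 0 := fun b hb =>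
    FTC0 (idx b) b ⟨idx_le b hb, (idx_lt b).le⟩
  -- the global derivative candidate
  set D : ℝ → EuclideanSpace ℝ (Fin n) := fun u => if u < 0 then φX' u else G u with hDdef
  have hDneg : ∀ u, u < 0 → D u = φX' u := fun u hu => if_pos hu
  have hDpos : ∀ u, 0 ≤ u → D u = G u := fun u hu => if_neg (not_lt.2 hu)
  -- integrability of D
  have negD : ∀ a b : ℝ, -h ≤ a → b ≤ 0 → IntegrableOn D (Icc a b) ∧
      IntegrableOn (fun u => ‖D u‖ ^ 2) (Icc a b) := by
    intro a b ha hb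
    have hsub : Icc a b ⊆ Icc (-h) 0 := Icc_subset_Icc ha hb
    have heq : ∀ᵐ u ∂(volume.restrict (Icc a b)), φX' u = D u := by
      filter_upwards [ae_restrict_of_ae hne0, ae_restrict_mem measurableSet_Icc] with u hu hmem
      rw [hDneg u (lt_of_le_of_ne (hmem.2.trans hb) hu)]
    refine ⟨(hφ.2.1.mono_set hsub).congr heq, (hφ.2.2.mono_set hsub).congr ?_⟩
    filter_upwards [heq] with u hu
    rw [hu]
  have posD : ∀ a b : ℝ, 0 ≤ a → 0 ≤ b → IntegrableOn D (Icc a b) ∧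
      IntegrableOn (fun u => ‖D u‖ ^ 2) (Icc a b) := by
    intro a b ha hb
    have heq : EqOn G D (Icc a b) := fun u hu => (hDpos u (ha.trans hu.1)).symm
    have heq2 : EqOn (fun u => ‖G u‖ ^ 2) (fun u => ‖D u‖ ^ 2) (Icc a b) := fun u hu => by
      simp only [heq hu]
    exact ⟨((hGint b hb).1.mono_set (Icc_subset_Icc ha le_rfl)).congr_fun heq measurableSet_Icc,
      ((hGint b hb).2.mono_set (Icc_subset_Icc ha le_rfl)).congr_fun heq2 measurableSet_Icc⟩
  have INTD : ∀ a b : ℝ, -h ≤ a → a ≤ b → IntegrableOn D (Icc a b) ∧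
      IntegrableOn (fun u => ‖D u‖ ^ 2) (Icc a b) := by
    intro a b ha hab
    rcases le_or_gt b 0 with hb0 | hb0
    · exact negD a b ha hb0
    rcases le_or_gt 0 a with ha0 | ha0
    · exact posD a b ha0 (ha0.trans hab)
    · have h1 := negD a 0 ha le_rfl
      have h2 := posD 0 b le_rfl hb0.le
      have hsub : Icc a b ⊆ Icc a 0 ∪ Icc 0 b := by
        intro u hu
        rcases le_or_gt u 0 with h | h
        · exact Or.inl ⟨hu.1, h⟩
        · exact Or.inr ⟨h.le, hu.2⟩
      exact ⟨(h1.1.union h2.1).mono_set hsub, (h1.2.union h2.2).mono_set hsub⟩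
  have hDii : ∀ a b : ℝ, -h ≤ a → a ≤ b → IntervalIntegrable D volume a b := by
    intro a b ha hab
    rw [intervalIntegrable_iff_integrableOn_Icc_of_le hab]
    exact (INTD a b ha hab).1
  -- FTC for D
  have FTCneg : ∀ a b : ℝ, -h ≤ a → a ≤ b → b ≤ 0 → ∫ u in a..b, D u = X b - X a := by
    intro a b ha hab hb0
    have hcong : ∫ u in a..b, D u = ∫ u in a..b, φX' u := by
      apply intervalIntegral.integral_congr_ae
      filter_upwards [hne0] with u hu hmem
      rw [uIoc_of_le hab] at hmem
      exact hDneg u (lt_of_le_of_ne (hmem.2.trans hb0) hu)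
    rw [hcong]
    have e1 := hXeq b ⟨ha.trans hab, hb0⟩
    have e2 := hXeq a ⟨ha, hab.trans hb0⟩
    have hsub := intervalIntegral.integral_interval_sub_left
      (hφii (-h) b le_rfl (by linarith) hb0) (hφii (-h) a le_rfl ha (by linarith))
    rw [e1, e2, ← hsub]
    abel
  have Dpos : ∀ a b : ℝ, 0 ≤ a → a ≤ b → ∫ u in a..b, D u = ∫ u in a..b, G u := by
    intro a b ha hab
    apply intervalIntegral.integral_congr
    intro u hu
    rw [uIcc_of_le hab] at hu
    exact hDpos u (ha.trans hu.1)
  have FTCfull : ∀ a b : ℝ, -h ≤ a → a ≤ b → ∫ u in a..b, D u = X b - X a := by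
    intro a b ha hab
    rcases le_or_gt b 0 with hb0 | hb0
    · exact FTCneg a b ha hab hb0
    rcases le_or_gt 0 a with ha0 | ha0
    · rw [Dpos a b ha0 hab]
      have hsub := intervalIntegral.integral_interval_sub_left
        (hGii 0 b le_rfl (ha0.trans hab)) (hGii 0 a le_rfl ha0)
      rw [← hsub, FTCpos a ha0, FTCpos b (ha0.trans hab)]
      abel
    · have i1 : IntervalIntegrable D volume a 0 := hDii a 0 ha ha0.le
      have i2 : IntervalIntegrable D volume 0 b := hDii 0 b (by linarith) hb0.le
      rw [← intervalIntegral.integral_add_adjacent_intervals i1 i2,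
        FTCneg a 0 ha ha0.le le_rfl, Dpos 0 b le_rfl hb0.le, FTCpos b hb0.le]
      abel
  -- conclusion
  refine ⟨D, hDneg, ?_⟩
  intro s hs
  refine ⟨?_, ?_, ?_⟩
  · intro θ hθ
    have h1 : ∫ u in (-h)..θ, D (s + u) = ∫ u in (s + -h)..(s + θ), D u :=
      intervalIntegral.integral_comp_add_left D s
    have h2 : ∫ u in (s + -h)..(s + θ), D u = X (s + θ) - X (s + -h) :=
      FTCfull (s + -h) (s + θ) (by linarith) (by linarith [hθ.1])
    rw [h1, h2]
    abel
  · have := hDii (s - h) s (by linarith) (by linarith)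
    have h3 := this.comp_add_left s
    have h4 : IntervalIntegrable (fun u => D (s + u)) volume (-h) 0 := by
      have e1 : s - h - s = -h := by ring
      have e2 : s - s = 0 := by ring
      rwa [e1, e2] at h3
    rwa [intervalIntegrable_iff_integrableOn_Icc_of_le (by linarith)] at h4
  · have : IntervalIntegrable (fun u => ‖D u‖ ^ 2) volume (s - h) s := by
      rw [intervalIntegrable_iff_integrableOn_Icc_of_le (by linarith)]
      exact (INTD (s - h) s (by linarith) (by linarith)).2
    have h3 := this.comp_add_left s
    have h4 : IntervalIntegrable (fun u => ‖D (s + u)‖ ^ 2) volume (-h) 0 := by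
      have e1 : s - h - s = -h := by ring
      have e2 : s - s = 0 := by ring
      rwa [e1, e2] at h3
    rwa [intervalIntegrable_iff_integrableOn_Icc_of_le (by linarith)] at h4


lemma antitoneOn_aux {f : ℝ → ℝ} {T : ℝ}
    (hf : ∀ σ ∈ Icc (0:ℝ) T, ∃ d : ℝ, d ≤ 0 ∧ HasDerivWithinAt f d (Icc 0 T) σ) :
    AntitoneOn f (Icc 0 T) := by
  refine antitoneOn_of_deriv_nonpos (convex_Icc 0 T) ?_ ?_ ?_
  · intro x hx
    obtain ⟨d, -, hd⟩ := hf x hx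
    exact hd.continuousWithinAt
  · rw [interior_Icc]
    intro x hx
    obtain ⟨d, -, hd⟩ := hf x (mem_Icc_of_Ioo hx)
    exact ((hd.hasDerivAt (Icc_mem_nhds hx.1 hx.2)).differentiableAt).differentiableWithinAt
  · rw [interior_Icc]
    intro x hx
    obtain ⟨d, hd0, hd⟩ := hf x (mem_Icc_of_Ioo hx)
    rw [(hd.hasDerivAt (Icc_mem_nhds hx.1 hx.2)).deriv]
    exact hd0

lemma exists_reset_interval {Tm TM : ℝ} {t : ℕ → ℝ} (ht : IsResetSeq Tm TM t)
    {s : ℝ} (hs : 0 ≤ s) : ∃ k, t k ≤ s ∧ s < t (k + 1) := by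
  classical
  obtain ⟨htm, ht0, -, htop⟩ := ht
  have hex : ∃ k, s < t (k + 1) := by
    obtain ⟨N, hN⟩ := (htop.eventually (eventually_gt_atTop s)).exists
    exact ⟨N, lt_of_lt_of_le hN (htm.monotone (Nat.le_succ N))⟩
  refine ⟨Nat.find hex, ?_, Nat.find_spec hex⟩
  rcases Nat.eq_zero_or_pos (Nat.find hex) with h0 | hpos
  · rw [h0, ht0]; exact hs
  · obtain ⟨m, hm⟩ := Nat.exists_eq_succ_of_ne_zero hpos.ne'
    have := Nat.find_min hex (show m < Nat.find hex by omega)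
    rw [hm]; exact not_lt.mp this


/-- Proposition 2: exponential stability of the sampled-data system via a
Lyapunov–Krasovskii functional `V` and a family of looped functionals `𝒱_k`.
Here `𝒱 k τ χ` is the value of the functional `𝒱_k` at time `τ` on the lifted
function `χ = χ_k`, where `χ_k (τ, θ) = X (t_k + τ + θ)`. -/
theorem proposition2
    (n : ℕ) (Λ Λd K : Matrix (Fin n) (Fin n) ℝ)
    (h α Tm TM : ℝ) (hh : 0 < h) (hα : 0 < α) (hTm : 0 ≤ Tm) (hTM : Tm ≤ TM)
    (V : (ℝ → EuclideanSpace ℝ (Fin n)) → ℝ) (μ₁ μ₂ : ℝ) (hμ₁ : 0 < μ₁) (hμ₂ : 0 < μ₂)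
    -- the sandwich bound `μ₁‖φ(0)‖² ≤ V(φ) ≤ μ₂‖φ‖²_W` for all `φ ∈ W[-h,0]`
    (hV : ∀ φ φ' : ℝ → EuclideanSpace ℝ (Fin n), InW h φ φ' →
      μ₁ * ‖φ 0‖ ^ 2 ≤ V φ ∧ V φ ≤ μ₂ * (Wnorm h φ φ') ^ 2)
    (𝒱 : ℕ → ℝ → (ℝ → ℝ → EuclideanSpace ℝ (Fin n)) → ℝ) (η : ℝ) (hη : 0 ≤ η)
    -- conditions (i)–(iv) along the lifted solutions, on each sampling interval
    (hcond : ∀ t : ℕ → ℝ, IsResetSeq Tm TM t →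
      ∀ φX φX' X : ℝ → EuclideanSpace ℝ (Fin n), InW h φX φX' →
        IsSampledSol Λ Λd K h t φX X →
        ∀ k : ℕ,
          -- (i) looping condition `e^{2αT_k} 𝒱_k(T_k, χ_k) = 𝒱_k(0, χ_k)`
          (Real.exp (2 * α * (t (k + 1) - t k)) *
              𝒱 k (t (k + 1) - t k) (fun τ θ => X (t k + τ + θ)) =
            𝒱 k 0 (fun τ θ => X (t k + τ + θ))) ∧
          -- (ii) `𝒱_k(0, χ_k) ≤ η V(χ_k(0,·))`
          (𝒱 k 0 (fun τ θ => X (t k + τ + θ)) ≤ η * V (fun θ => X (t k + θ))) ∧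
          -- (iii) `−η V(χ_k(0,·)) ≤ e^{2ατ} 𝒱_k(τ, χ_k)` on `[0, T_k]`
          (∀ τ ∈ Icc 0 (t (k + 1) - t k),
            -(η * V (fun θ => X (t k + θ))) ≤
              Real.exp (2 * α * τ) * 𝒱 k τ (fun τ' θ => X (t k + τ' + θ))) ∧
          -- (iv) `σ ↦ e^{2ασ}(V(χ_k(σ,·)) + 𝒱_k(σ, χ_k))` has nonpositive derivative
          (∀ σ ∈ Icc 0 (t (k + 1) - t k), ∃ d : ℝ, d ≤ 0 ∧
            HasDerivWithinAt
              (fun σ' => Real.exp (2 * α * σ') *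
                (V (fun θ => X (t k + σ' + θ)) + 𝒱 k σ' (fun τ' θ => X (t k + τ' + θ))))
              d (Icc 0 (t (k + 1) - t k)) σ)) :
    -- exponential stability with decay rate `α`
    ∀ ε > (0:ℝ), ∃ δ > (0:ℝ), ∀ t : ℕ → ℝ, IsResetSeq Tm TM t →
      ∀ φX φX' X : ℝ → EuclideanSpace ℝ (Fin n), InW h φX φX' →
        Wnorm h φX φX' < δ → IsSampledSol Λ Λd K h t φX X →
        ∀ s : ℝ, 0 ≤ s → ‖X s‖ < ε * Real.exp (-(α * s)) := by
  classical
  intro ε hε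
  have hden : 0 < (1 + 2 * η) * μ₂ := by positivity
  set r : ℝ := μ₁ / ((1 + 2 * η) * μ₂) with hr
  have hrpos : 0 < r := by positivity
  refine ⟨ε * Real.sqrt r, by positivity, ?_⟩
  intro t ht φX φX' X hφ hWn hX s hs
  obtain ⟨htm, ht0, hTk, htop⟩ := ht
  have ht' : IsResetSeq Tm TM t := ⟨htm, ht0, hTk, htop⟩
  obtain ⟨D, hDneg, hDseg⟩ := seg_exists_deriv hh ht' hφ hX
  have hne0 : ∀ᵐ u : ℝ, u ≠ (0:ℝ) := by
    refine ae_iff.2 ?_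
    simp only [not_not]
    have : {u : ℝ | u = 0} = {0} := by ext u; simp
    rw [this]
    exact measure_singleton 0
  have hTpos : ∀ k, 0 < t (k + 1) - t k := fun k => sub_pos.2 (htm (Nat.lt_succ_self k))
  have hseg0 : ∀ k : ℕ, (fun θ => X (t k + 0 + θ)) = fun θ => X (t k + θ) := by
    intro k; funext θ; norm_num
  have hsegT : ∀ k : ℕ,
      (fun θ => X (t k + (t (k + 1) - t k) + θ)) = fun θ => X (t (k + 1) + θ) := by
    intro k; funext θ; congr 1; ring
  have anti : ∀ k, AntitoneOn
      (fun σ' => Real.exp (2 * α * σ') *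
        (V (fun θ => X (t k + σ' + θ)) + 𝒱 k σ' (fun τ' θ => X (t k + τ' + θ))))
      (Icc 0 (t (k + 1) - t k)) := fun k =>
    antitoneOn_aux fun σ hσ => (hcond t ht' φX φX' X hφ hX k).2.2.2 σ hσ
  have stepA : ∀ k, Real.exp (2 * α * (t (k + 1) - t k)) * V (fun θ => X (t (k + 1) + θ)) ≤
      V (fun θ => X (t k + θ)) := by
    intro k
    obtain ⟨hi, hii, hiii, hiv⟩ := hcond t ht' φX φX' X hφ hX k
    have h0m : (0:ℝ) ∈ Icc (0:ℝ) (t (k + 1) - t k) := ⟨le_rfl, (hTpos k).le⟩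
    have hTm' : (t (k + 1) - t k) ∈ Icc (0:ℝ) (t (k + 1) - t k) := ⟨(hTpos k).le, le_rfl⟩
    have hmono := anti k h0m hTm' (hTpos k).le
    simp only [] at hmono
    rw [mul_zero, Real.exp_zero, one_mul, hseg0 k, hsegT k, mul_add, hi] at hmono
    linarith
  have stepB : ∀ k, Real.exp (2 * α * t k) * V (fun θ => X (t k + θ)) ≤
      V (fun θ => X (t 0 + θ)) := by
    intro k
    induction k with
    | zero => rw [ht0]; simp
    | succ k ih =>
      have hA := stepA k
      have e : 2 * α * t (k + 1) = 2 * α * t k + 2 * α * (t (k + 1) - t k) := by ring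
      calc Real.exp (2 * α * t (k + 1)) * V (fun θ => X (t (k + 1) + θ))
          = Real.exp (2 * α * t k) *
            (Real.exp (2 * α * (t (k + 1) - t k)) * V (fun θ => X (t (k + 1) + θ))) := by
            rw [e, Real.exp_add, mul_assoc]
        _ ≤ Real.exp (2 * α * t k) * V (fun θ => X (t k + θ)) :=
            mul_le_mul_of_nonneg_left hA (Real.exp_pos _).le
        _ ≤ V (fun θ => X (t 0 + θ)) := ih
  have stepC : ∀ k, ∀ τ ∈ Icc (0:ℝ) (t (k + 1) - t k),
      Real.exp (2 * α * τ) * V (fun θ => X (t k + τ + θ)) ≤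
        (1 + 2 * η) * V (fun θ => X (t k + θ)) := by
    intro k τ hτ
    obtain ⟨hi, hii, hiii, hiv⟩ := hcond t ht' φX φX' X hφ hX k
    have h0m : (0:ℝ) ∈ Icc (0:ℝ) (t (k + 1) - t k) := ⟨le_rfl, (hTpos k).le⟩
    have hmono := anti k h0m hτ hτ.1
    simp only [] at hmono
    rw [mul_zero, Real.exp_zero, one_mul, hseg0 k, mul_add] at hmono
    have h3 := hiii τ hτ
    linarith
  obtain ⟨k, hk1, hk2⟩ := exists_reset_interval ht' hs
  have hτmem : s - t k ∈ Icc (0:ℝ) (t (k + 1) - t k) := ⟨by linarith, by linarith⟩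
  have hC := stepC k (s - t k) hτmem
  have hsegs : (fun θ => X (t k + (s - t k) + θ)) = fun θ => X (s + θ) := by
    funext θ; congr 1; ring
  rw [hsegs] at hC
  have hlow := (hV _ _ (hDseg s hs)).1
  simp only [add_zero] at hlow
  have hInW0 := hDseg 0 le_rfl
  have hup0 := (hV _ _ hInW0).2
  have hWeq : Wnorm h (fun θ => X (0 + θ)) (fun u => D (0 + u)) = Wnorm h φX φX' := by
    unfold Wnorm
    congr 1
    · refine iSup_congr fun θ => ?_
      show ‖X (0 + (θ : ℝ))‖ = ‖φX (θ : ℝ)‖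
      rw [zero_add, hX.2.1 θ.1 θ.2]
    · congr 1
      apply intervalIntegral.integral_congr_ae
      filter_upwards [hne0] with u hu hmem
      rw [uIoc_of_le (by linarith : -h ≤ (0:ℝ))] at hmem
      rw [zero_add, hDneg u (lt_of_le_of_ne hmem.2 hu)]
  have hup : V (fun θ => X (t 0 + θ)) ≤ μ₂ * (Wnorm h φX φX') ^ 2 := by
    rw [hWeq] at hup0
    rw [show (fun θ => X (t 0 + θ)) = (fun θ => X (0 + θ)) by rw [ht0]]
    exact hup0
  have hB := stepB k
  have hchain : Real.exp (2 * α * s) * (μ₁ * ‖X s‖ ^ 2) ≤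
      (1 + 2 * η) * (μ₂ * (Wnorm h φX φX') ^ 2) := by
    have e1p := Real.exp_pos (2 * α * (s - t k))
    have e2p := Real.exp_pos (2 * α * t k)
    have s1 : Real.exp (2 * α * (s - t k)) * (μ₁ * ‖X s‖ ^ 2) ≤
        (1 + 2 * η) * V (fun θ => X (t k + θ)) :=
      le_trans (mul_le_mul_of_nonneg_left hlow e1p.le) hC
    have s2 := mul_le_mul_of_nonneg_left s1 e2p.le
    have e3 : Real.exp (2 * α * t k) * Real.exp (2 * α * (s - t k)) = Real.exp (2 * α * s) := by
      rw [← Real.exp_add]; congr 1; ring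
    have s4 : (1 + 2 * η) * (Real.exp (2 * α * t k) * V (fun θ => X (t k + θ))) ≤
        (1 + 2 * η) * V (fun θ => X (t 0 + θ)) :=
      mul_le_mul_of_nonneg_left hB (by linarith)
    have s5 : (1 + 2 * η) * V (fun θ => X (t 0 + θ)) ≤
        (1 + 2 * η) * (μ₂ * (Wnorm h φX φX') ^ 2) :=
      mul_le_mul_of_nonneg_left hup (by linarith)
    calc Real.exp (2 * α * s) * (μ₁ * ‖X s‖ ^ 2)
        = Real.exp (2 * α * t k) * (Real.exp (2 * α * (s - t k)) * (μ₁ * ‖X s‖ ^ 2)) := by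
          rw [← e3, mul_assoc]
      _ ≤ Real.exp (2 * α * t k) * ((1 + 2 * η) * V (fun θ => X (t k + θ))) := s2
      _ = (1 + 2 * η) * (Real.exp (2 * α * t k) * V (fun θ => X (t k + θ))) := by ring
      _ ≤ (1 + 2 * η) * V (fun θ => X (t 0 + θ)) := s4
      _ ≤ (1 + 2 * η) * (μ₂ * (Wnorm h φX φX') ^ 2) := s5
  have hWn0 : 0 ≤ Wnorm h φX φX' := by
    unfold Wnorm
    have h1 : 0 ≤ ⨆ θ : Icc (-h) (0:ℝ), ‖φX θ.1‖ := Real.iSup_nonneg fun θ => norm_nonneg _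
    have h2 : 0 ≤ (∫ u in (-h)..0, ‖φX' u‖ ^ 2) ^ (1/2 : ℝ) :=
      Real.rpow_nonneg
        (intervalIntegral.integral_nonneg (by linarith) fun u _ => by positivity) _
    linarith
  have hWsq : (Wnorm h φX φX') ^ 2 < (ε * Real.sqrt r) ^ 2 :=
    pow_lt_pow_left₀ hWn hWn0 two_ne_zero
  have hδsq : (1 + 2 * η) * (μ₂ * (ε * Real.sqrt r) ^ 2) = μ₁ * ε ^ 2 := by
    rw [mul_pow, Real.sq_sqrt hrpos.le, hr]
    field_simp
  have hstrict : Real.exp (2 * α * s) * (μ₁ * ‖X s‖ ^ 2) < μ₁ * ε ^ 2 := by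
    refine lt_of_le_of_lt hchain ?_
    calc (1 + 2 * η) * (μ₂ * (Wnorm h φX φX') ^ 2)
        < (1 + 2 * η) * (μ₂ * (ε * Real.sqrt r) ^ 2) :=
          mul_lt_mul_of_pos_left (mul_lt_mul_of_pos_left hWsq hμ₂) (by linarith)
      _ = μ₁ * ε ^ 2 := hδsq
  have hfin : ‖X s‖ ^ 2 < (ε * Real.exp (-(α * s))) ^ 2 := by
    have hm := mul_lt_mul_of_pos_left hstrict (Real.exp_pos (-(2 * α * s)))
    rw [← mul_assoc, ← Real.exp_add] at hm
    rw [show -(2 * α * s) + 2 * α * s = 0 by ring, Real.exp_zero, one_mul] at hm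
    have e4 : (ε * Real.exp (-(α * s))) ^ 2 = ε ^ 2 * Real.exp (-(2 * α * s)) := by
      rw [mul_pow]
      congr 1
      rw [sq, ← Real.exp_add]
      congr 1
      ring
    rw [e4]
    nlinarith [hm]
  exact lt_of_pow_lt_pow_left₀ 2 (by positivity) hfin


end
end

section
/- (Input/output equivalence of the reset integrator and its sampled-data realization) Let u : ℝ → ℝ be continuous and let {t_k} be a reset sequence. Suppose x_ri : ℝ → ℝ satisfies, for each k ≥ 0: x_ri is differentiable on (t_k, t_{k+1}) with ẋ_ri(t) = u(t), x_ri is continuous from the left on (t_k, t_{k+1}], and lim_{t → t_k⁺} x_ri(t) = 0 (the reset to zero). Let x_s : ℝ → ℝ be defined by x_s(t) = x_s(0) + ∫₀ᵗ u(s) ds. Then for every k and every t ∈ (t_k, t_{k+1}], x_ri(t) = x_s(t) − x_s(t_k); in particular, the output y_ri(t) = x_ri(t) of the reset integrator coincides with the output y_s(t) = x_s(t) − x_s(t_k) of the sampled-data system for all t > 0. -/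
open Set Filter

/-- Input/output equivalence of the reset integrator and its sampled-data realization:
if `x_ri` satisfies `ẋ_ri = u` on each inter-reset interval, is left-continuous there and is
reset to `0` at each reset instant, and `x_s(t) = x_s(0) + ∫₀ᵗ u`, then
`x_ri(t) = x_s(t) − x_s(t_k)` on each `(t_k, t_{k+1}]`; in particular the output
`y_ri = x_ri` of the reset integrator coincides with the output `y_s(t) = x_s(t) − x_s(t_k)`
of the sampled-data system for all `t > 0`. -/
theorem reset_integrator_sampled_data_equivalence
    (Tm TM : ℝ) (hTm : 0 ≤ Tm) (hTM : Tm ≤ TM)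
    (t : ℕ → ℝ) (ht : IsResetSeq Tm TM t)
    (u : ℝ → ℝ) (hu : Continuous u)
    (xri : ℝ → ℝ)
    (hode : ∀ k : ℕ, ∀ s ∈ Ioo (t k) (t (k + 1)), HasDerivAt xri (u s) s)
    (hleft : ∀ k : ℕ, ContinuousOn xri (Ioc (t k) (t (k + 1))))
    (hreset : ∀ k : ℕ, Tendsto xri (nhdsWithin (t k) (Ioi (t k))) (nhds 0))
    (xs : ℝ → ℝ) (hxs : ∀ τ : ℝ, xs τ = xs 0 + ∫ s in (0:ℝ)..τ, u s) :
    ∀ k : ℕ, ∀ τ ∈ Ioc (t k) (t (k + 1)), xri τ = xs τ - xs (t k) := by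
  intro k τ hτm
  obtain ⟨hτ1, hτ2⟩ := hτm
  set F : ℝ → ℝ := fun τ => ∫ s in (t k)..τ, u s with hFdef
  have hFderiv : ∀ x : ℝ, HasDerivAt F (u x) x := fun x =>
    intervalIntegral.integral_hasDerivAt_right (hu.intervalIntegrable _ _)
      (hu.stronglyMeasurableAtFilter _ _) hu.continuousAt
  have hFcont : Continuous F := continuous_iff_continuousAt.2 fun x => (hFderiv x).continuousAt
  have hxsF : xs τ - xs (t k) = F τ := by
    rw [hxs τ, hxs (t k)]
    simp [hFdef, intervalIntegral.integral_interval_sub_left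
      (hu.intervalIntegrable _ _) (hu.intervalIntegrable _ _)]
  rw [hxsF]
  -- On any [a, τ] with t k < a ≤ τ, xri and F differ by a constant.
  have key : ∀ a ∈ Ioc (t k) τ, xri τ - F τ = xri a - F a := by
    intro a ha
    obtain ⟨ha1, ha2⟩ := ha
    have heq : ∀ y ∈ Icc a τ, xri y = (fun x => F x + (xri a - F a)) y := by
      apply eq_of_has_deriv_right_eq (f' := u)
      · intro x hx
        exact ((hode k x ⟨lt_of_lt_of_le ha1 hx.1,
          lt_of_lt_of_le hx.2 hτ2⟩).hasDerivWithinAt)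
      · intro x hx
        exact (((hFderiv x).add_const _).hasDerivWithinAt)
      · exact (hleft k).mono fun x hx => ⟨lt_of_lt_of_le ha1 hx.1, le_trans hx.2 hτ2⟩
      · exact (hFcont.add continuous_const).continuousOn
      · simp
    have := heq τ ⟨ha2, le_refl τ⟩
    simp at this
    linarith
  -- Take the limit a → t k from the right.
  have hτk : τ ∈ Ioi (t k) := hτ1
  have hev : ∀ᶠ a in nhdsWithin (t k) (Ioi (t k)), xri a - F a = xri τ - F τ := by
    have hmem : Ioo (t k) τ ∈ nhdsWithin (t k) (Ioi (t k)) := by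
      apply mem_nhdsWithin.2 ⟨Iio τ, isOpen_Iio, hτ1, ?_⟩
      rintro x ⟨hx1, hx2⟩
      exact ⟨hx2, hx1⟩
    filter_upwards [hmem] with a ha
    exact (key a ⟨ha.1, ha.2.le⟩).symm
  have hlim : Tendsto (fun a => xri a - F a) (nhdsWithin (t k) (Ioi (t k))) (nhds 0) := by
    have hFlim : Tendsto F (nhdsWithin (t k) (Ioi (t k))) (nhds 0) := by
      have h0 : F (t k) = 0 := by simp [hFdef]
      have := ((hFcont.continuousAt (x := t k)).continuousWithinAt (s := Ioi (t k))).tendsto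
      rwa [h0] at this
    simpa using (hreset k).sub hFlim
  have hlim2 : Tendsto (fun _ : ℝ => xri τ - F τ) (nhdsWithin (t k) (Ioi (t k))) (nhds 0) :=
    hlim.congr' hev
  have hne : (nhdsWithin (t k) (Ioi (t k))).NeBot := nhdsGT_neBot (t k)
  have := tendsto_nhds_unique hlim2 tendsto_const_nhds
  linarith
end

section
/- (Minimal sampled-data realization of the PI+RI controller) Let u : ℝ → ℝ be continuous, k_p, k_i ∈ ℝ, p_r ∈ [0,1], and let {t_k} be a reset sequence, with resets applied at t_k for k ≥ 1. Suppose x_i : [0,∞) → ℝ is continuous with x_i(t) = x_i(0) + k_i ∫₀ᵗ u(s) ds, and x_ri : [0,∞) → ℝ satisfies x_ri(t) = x_ri(0) + k_i ∫₀ᵗ u(s) ds for t ∈ [0, t_1] and x_ri(t) = k_i ∫_{t_k}^t u(s) ds for t ∈ (t_k, t_{k+1}], k ≥ 1 (i.e. ẋ_ri = k_i u between resets and x_ri(t_k⁺) = 0 for k ≥ 1). Define x_s(t) = x_i(0) + k_i ∫₀ᵗ u(s) ds. Then the PI+RI output y_r(t) = (1 − p_r) x_i(t) + p_r x_ri(t)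 + k_p u(t) satisfies: y_r(t) = x_s(t) − p_r (x_i(0) − x_ri(0)) + k_p u(t) for all t ∈ [0, t_1], and y_r(t) = x_s(t) − p_r x_s(t_k) + k_p u(t) for all t ∈ (t_k, t_{k+1}], k ≥ 1. -/
open Set Filter

/-- Minimal sampled-data realization of the PI+RI controller: with
`x_i(t) = x_i(0) + k_i ∫₀ᵗ u`, `x_ri` the reset integrator state (reset at `t_k`, `k ≥ 1`），
and `x_s(t) = x_i(0) + k_i ∫₀ᵗ u`, the PI+RI output
`y_r = (1−p_r)x_i + p_r x_ri + k_p u` satisfies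
`y_r(t) = x_s(t) − p_r (x_i(0) − x_ri(0)) + k_p u(t)` on `[0, t_1]` and
`y_r(t) = x_s(t) − p_r x_s(t_k) + k_p u(t)` on `(t_k, t_{k+1}]`, `k ≥ 1`. -/
theorem piri_minimal_sampled_realization
    (Tm TM kp ki pr : ℝ) (hTm : 0 ≤ Tm) (hTM : Tm ≤ TM) (hpr : pr ∈ Icc (0:ℝ) 1)
    (t : ℕ → ℝ) (ht : IsResetSeq Tm TM t)
    (u : ℝ → ℝ) (hu : Continuous u)
    (xi : ℝ → ℝ) (hxi : ∀ τ : ℝ, 0 ≤ τ → xi τ = xi 0 + ki * ∫ s in (0:ℝ)..τ, u s)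
    (xri : ℝ → ℝ)
    (hxri0 : ∀ τ ∈ Icc 0 (t 1), xri τ = xri 0 + ki * ∫ s in (0:ℝ)..τ, u s)
    (hxrik : ∀ k : ℕ, 1 ≤ k → ∀ τ ∈ Ioc (t k) (t (k + 1)),
      xri τ = ki * ∫ s in (t k)..τ, u s)
    (xs : ℝ → ℝ) (hxs : ∀ τ : ℝ, xs τ = xi 0 + ki * ∫ s in (0:ℝ)..τ, u s) :
    (∀ τ ∈ Icc 0 (t 1),
      (1 - pr) * xi τ + pr * xri τ + kp * u τ
        = xs τ - pr * (xi 0 - xri 0) + kp * u τ) ∧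
    (∀ k : ℕ, 1 ≤ k → ∀ τ ∈ Ioc (t k) (t (k + 1)),
      (1 - pr) * xi τ + pr * xri τ + kp * u τ
        = xs τ - pr * xs (t k) + kp * u τ) := by
  obtain ⟨hmono, ht0, -, -⟩ := ht
  constructor
  · intro τ hτ
    rw [hxi τ hτ.1, hxri0 τ hτ, hxs τ]
    ring
  · intro k hk τ hτ
    have h0k : (0:ℝ) ≤ t k := ht0 ▸ hmono.monotone (Nat.zero_le k)
    have h0τ : (0:ℝ) ≤ τ := le_trans h0k hτ.1.le
    have hsplit : (∫ s in (0:ℝ)..τ, u s) =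
        (∫ s in (0:ℝ)..(t k), u s) + ∫ s in (t k)..τ, u s :=
      (intervalIntegral.integral_add_adjacent_intervals
        (hu.intervalIntegrable _ _) (hu.intervalIntegrable _ _)).symm
    rw [hxi τ h0τ, hxrik k hk τ hτ, hxs τ, hxs (t k), hsplit]
    ring
end

section
/- (Weighted Bessel–Legendre integral inequality) Let h > 0, α ≥ 0, N ∈ ℕ, let R ∈ ℝ^{n×n} be symmetric positive semidefinite, and let g : [−h,0] → ℝⁿ be continuous. For j = 0,…,N set Ω_j = ∫_{−h}^0 L_j(s) g(s) ds, where L_j is the j-th Legendre polynomial shifted to [−h,0]. Then ∫_{−h}^0 e^{2αs} g(s)ᵀ R g(s) ds ≥ (e^{−2αh}/h) Σ_{j=0}^N (2j+1) Ω_jᵀ R Ω_j. -/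
open Matrix Set

/-- The `k`-th Legendre polynomial shifted to the interval `[−h, 0]`:
`L_k(s) = (−1)^k Σ_{l=0}^k (−1)^l C(k,l) C(k+l,l) ((s+h)/h)^l`. -/
noncomputable def LegendreShifted (h : ℝ) (k : ℕ) (s : ℝ) : ℝ :=
  (-1 : ℝ) ^ k * ∑ l ∈ Finset.range (k + 1),
    (-1 : ℝ) ^ l * (Nat.choose k l : ℝ) * (Nat.choose (k + l) l : ℝ) * ((s + h) / h) ^ l

section Aux

open Polynomial intervalIntegral

noncomputable def Qp (k : ℕ) : Polynomial ℝ := (X * (X - 1)) ^ k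

noncomputable def Ptil (k : ℕ) (t : ℝ) : ℝ :=
  ∑ l ∈ Finset.range (k+1), (-1:ℝ)^(k+l) * (Nat.choose k l) * (Nat.choose (k+l) l) * t^l

lemma Qp_boundary {k j : ℕ} (hj : j < k) :
    (derivative^[j] (Qp k)).eval 0 = 0 ∧ (derivative^[j] (Qp k)).eval 1 = 0 := by
  obtain ⟨r, hr⟩ := pow_sub_dvd_iterate_derivative_pow (X * (X - 1) : Polynomial ℝ) k j
  have hkj : 0 < k - j := Nat.sub_pos_of_lt hj
  unfold Qp
  constructor <;> · rw [hr]; simp [zero_pow hkj.ne']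

lemma poly_FTC (p : Polynomial ℝ) :
    ∫ t in (0:ℝ)..1, (derivative p).eval t = p.eval 1 - p.eval 0 := by
  have : ∀ x ∈ Set.uIcc (0:ℝ) 1, HasDerivAt (fun t => p.eval t) ((derivative p).eval x) x :=
    fun x _ => p.hasDerivAt x
  exact intervalIntegral.integral_eq_sub_of_hasDerivAt this
    ((p.derivative.continuous_aeval).intervalIntegrable 0 1)

lemma poly_IBP (p q : Polynomial ℝ) :
    ∫ t in (0:ℝ)..1, (derivative p).eval t * q.eval t
      = p.eval 1 * q.eval 1 - p.eval 0 * q.eval 0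
        - ∫ t in (0:ℝ)..1, p.eval t * (derivative q).eval t := by
  have h := poly_FTC (p * q)
  rw [derivative_mul] at h
  have hsplit : ∫ t in (0:ℝ)..1, (derivative p * q + p * derivative q).eval t
      = (∫ t in (0:ℝ)..1, (derivative p).eval t * q.eval t)
        + ∫ t in (0:ℝ)..1, p.eval t * (derivative q).eval t := by
    simp only [eval_add, eval_mul]
    exact intervalIntegral.integral_add
      (((derivative p).continuous_aeval.mul q.continuous_aeval).intervalIntegrable 0 1)
      ((p.continuous_aeval.mul (derivative q).continuous_aeval).intervalIntegrable 0 1)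
  rw [hsplit] at h
  simp only [eval_mul] at h
  linarith

lemma IBP_chain (k : ℕ) : ∀ i ≤ k, ∀ u : Polynomial ℝ,
    ∫ t in (0:ℝ)..1, (derivative^[k] (Qp k)).eval t * u.eval t
      = (-1:ℝ)^i * ∫ t in (0:ℝ)..1, (derivative^[k-i] (Qp k)).eval t * (derivative^[i] u).eval t := by
  intro i
  induction i with
  | zero => intro _ u; simp
  | succ i ih =>
    intro hik u
    rw [ih (Nat.le_of_succ_le hik) u]
    have h1 : k - i = (k - (i+1)) + 1 := by omega
    have h2 : derivative^[k-i] (Qp k) = derivative (derivative^[k - (i+1)] (Qp k)) := by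
      rw [h1, Function.iterate_succ_apply']
    obtain ⟨hb0, hb1⟩ := Qp_boundary (k := k) (j := k - (i+1)) (by omega)
    rw [h2, poly_IBP, hb0, hb1, Function.iterate_succ_apply']
    ring

lemma beta_poly : ∀ b a : ℕ, ∫ t in (0:ℝ)..1, t^a * (t-1)^b
    = (-1:ℝ)^b * (a.factorial * b.factorial) / (a+b+1).factorial := by
  intro b
  induction b with
  | zero =>
    intro a
    have hfa : (a.factorial:ℝ) ≠ 0 := by positivity
    simp [integral_pow, Nat.factorial_succ]
    field_simp
  | succ b ih =>
    intro a
    have h := poly_IBP (X^(a+1)) ((X - 1)^(b+1))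
    have hdp : derivative (X^(a+1) : Polynomial ℝ) = C ((a:ℝ)+1) * X^a := by
      rw [derivative_X_pow]; push_cast; simp
    have hdq : derivative ((X - 1)^(b+1) : Polynomial ℝ) = C ((b:ℝ)+1) * (X-1)^b := by
      rw [derivative_pow]
      simp [derivative_X]
    rw [hdp, hdq] at h
    simp only [eval_mul, eval_pow, eval_C, eval_X, eval_sub, eval_one] at h
    rw [show ((1:ℝ) - 1) = 0 by norm_num] at h
    simp only [zero_pow (Nat.succ_ne_zero a), zero_pow (Nat.succ_ne_zero b), mul_zero, zero_mul,
      sub_zero, zero_sub] at h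
    have h1 : ∫ t in (0:ℝ)..1, ((a:ℝ)+1) * t^a * (t-1)^(b+1)
        = ((a:ℝ)+1) * ∫ t in (0:ℝ)..1, t^a * (t-1)^(b+1) := by
      rw [← intervalIntegral.integral_const_mul]; congr 1; ext t; ring
    have h2 : ∫ t in (0:ℝ)..1, t^(a+1) * (((b:ℝ)+1) * (t-1)^b)
        = ((b:ℝ)+1) * ∫ t in (0:ℝ)..1, t^(a+1) * (t-1)^b := by
      rw [← intervalIntegral.integral_const_mul]; congr 1; ext t; ring
    rw [h1, h2, ih (a+1)] at h
    have ha : ((a:ℝ)+1) ≠ 0 := by positivity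
    field_simp at h ⊢
    rw [show a + (b+1) + 1 = (a + 1 + b + 1) by omega]
    push_cast [Nat.factorial_succ] at h ⊢
    apply mul_left_cancel₀ ha
    linear_combination h


lemma Qp_expand (k : ℕ) : Qp k
    = ∑ l ∈ Finset.range (k+1), Polynomial.C ((-1:ℝ)^(k-l) * (Nat.choose k l)) * X^(k+l) := by
  unfold Qp
  rw [mul_pow, sub_eq_add_neg, add_pow, Finset.mul_sum]
  apply Finset.sum_congr rfl
  intro l hl
  rw [show ((-1 : Polynomial ℝ)) = Polynomial.C (-1 : ℝ) by simp, ← map_pow,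
    ← Polynomial.C_eq_natCast, _root_.map_mul]
  ring

lemma Dk_Qp (k : ℕ) : derivative^[k] (Qp k)
    = ∑ l ∈ Finset.range (k+1),
        Polynomial.C ((-1:ℝ)^(k-l) * (Nat.choose k l) * ((k+l).descFactorial k)) * X^l := by
  rw [Qp_expand, iterate_derivative_sum]
  apply Finset.sum_congr rfl
  intro l hl
  rw [iterate_derivative_C_mul, iterate_derivative_X_pow_eq_natCast_mul]
  rw [show k + l - k = l by omega, ← Polynomial.C_eq_natCast]
  simp only [_root_.map_mul]
  ring

lemma Dk_Qp_eval (k : ℕ) (t : ℝ) :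
    (derivative^[k] (Qp k)).eval t = (k.factorial : ℝ) * Ptil k t := by
  rw [Dk_Qp]
  unfold Ptil
  rw [eval_finset_sum, Finset.mul_sum]
  apply Finset.sum_congr rfl
  intro l hl
  have hd : (k+l).descFactorial k = k.factorial * (k+l).choose l := by
    rw [Nat.descFactorial_eq_factorial_mul_choose]
    congr 1
    rw [← Nat.choose_symm (by omega : l ≤ k + l), show k + l - l = k by omega]
  simp only [Finset.mem_range] at hl
  have hs : (-1:ℝ)^(k-l) = (-1:ℝ)^(k+l) := by
    rw [show k + l = (k - l) + 2*l by omega, pow_add, pow_mul]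
    norm_num
  rw [eval_mul, eval_C, eval_pow, eval_X, hd, hs]
  push_cast
  ring

lemma Imon_lt {k m : ℕ} (hm : m < k) :
    ∫ t in (0:ℝ)..1, (derivative^[k] (Qp k)).eval t * t^m = 0 := by
  have h := IBP_chain k k le_rfl (X^m)
  rw [Nat.sub_self] at h
  rw [show derivative^[k] (X^m : Polynomial ℝ) = 0 from
    iterate_derivative_eq_zero (by simp [natDegree_X_pow]; omega)] at h
  simpa [eval_pow] using h

lemma Imon_eq (k : ℕ) :
    ∫ t in (0:ℝ)..1, (derivative^[k] (Qp k)).eval t * t^k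
      = (k.factorial : ℝ)^3 / (2*k+1).factorial := by
  have h := IBP_chain k k le_rfl (X^k)
  rw [Nat.sub_self] at h
  rw [iterate_derivative_X_pow_eq_natCast_mul, Nat.sub_self] at h
  simp only [Function.iterate_zero_apply, pow_zero, mul_one, eval_mul, eval_natCast,
    Nat.descFactorial_self, eval_pow, eval_X] at h
  have hq : ∀ t : ℝ, (Qp k).eval t = t^k * (t-1)^k := by
    intro t; unfold Qp; simp [mul_pow]
  simp only [hq] at h
  have h2 : ∫ t in (0:ℝ)..1, t^k * (t-1)^k * (k.factorial:ℝ)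
      = (k.factorial:ℝ) * ∫ t in (0:ℝ)..1, t^k * (t-1)^k := by
    rw [← intervalIntegral.integral_const_mul]; congr 1; ext t; ring
  rw [h2, beta_poly k k] at h
  rw [h, show k+k+1 = 2*k+1 by omega]
  have hsq : (-1:ℝ)^k * (-1:ℝ)^k = 1 := by
    rw [← pow_add, ← two_mul, pow_mul]; norm_num
  have hF : ((2*k+1).factorial : ℝ) ≠ 0 := by positivity
  field_simp
  linear_combination hsq

lemma Ptil_continuous (k : ℕ) : Continuous (Ptil k) := by
  unfold Ptil
  exact continuous_finset_sum _ fun l _ => by continuity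

lemma ortho01 (j k : ℕ) (hjk : j ≤ k) :
    ∫ t in (0:ℝ)..1, Ptil j t * Ptil k t = if j = k then 1/(2*(k:ℝ)+1) else 0 := by
  have hfk : (k.factorial : ℝ) ≠ 0 := by positivity
  have h1 : ∀ t:ℝ, Ptil j t * Ptil k t
      = ∑ l ∈ Finset.range (j+1),
          ((-1:ℝ)^(j+l) * (Nat.choose j l) * (Nat.choose (j+l) l) / k.factorial)
            * ((derivative^[k] (Qp k)).eval t * t^l) := by
    intro t
    have hP : Ptil k t = (derivative^[k] (Qp k)).eval t / k.factorial := by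
      rw [Dk_Qp_eval]; field_simp
    rw [show Ptil j t = ∑ l ∈ Finset.range (j+1),
      (-1:ℝ)^(j+l) * (Nat.choose j l) * (Nat.choose (j+l) l) * t^l from rfl,
      Finset.sum_mul, hP]
    apply Finset.sum_congr rfl
    intro l _
    field_simp
  simp_rw [h1]
  rw [intervalIntegral.integral_finset_sum (fun l _ => by
    apply Continuous.intervalIntegrable
    exact continuous_const.mul (((derivative^[k] (Qp k)).continuous_aeval).mul (continuous_pow l)))]
  simp_rw [intervalIntegral.integral_const_mul]
  rcases eq_or_lt_of_le hjk with rfl | hlt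
  · rw [if_pos rfl]
    rw [Finset.sum_eq_single_of_mem j (Finset.self_mem_range_succ j)
      (fun l hl hne => by
        rw [Imon_lt (by simp only [Finset.mem_range] at hl; omega), mul_zero])]
    rw [Imon_eq]
    have hcc : ((2*j).choose j : ℝ) * j.factorial * j.factorial = (2*j).factorial := by
      have := Nat.choose_mul_factorial_mul_factorial (show j ≤ 2*j by omega)
      rw [show 2*j - j = j by omega] at this
      exact_mod_cast congrArg (Nat.cast (R := ℝ)) this
    have hff : ((2*j+1).factorial : ℝ) = (2*(j:ℝ)+1) * (2*j).factorial := by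
      rw [Nat.factorial_succ]; push_cast; ring
    have hs : (-1:ℝ)^(j+j) = 1 := by
      rw [← two_mul, pow_mul]; norm_num
    rw [show j + j = 2*j by omega] at *
    simp only [Nat.choose_self, Nat.cast_one, hs]
    have h2j1 : (2*(j:ℝ)+1) ≠ 0 := by positivity
    have hf2j : ((2*j).factorial : ℝ) ≠ 0 := by positivity
    rw [hff]
    field_simp
    linear_combination hcc
  · rw [if_neg (by omega)]
    apply Finset.sum_eq_zero
    intro l hl
    rw [Imon_lt (by simp only [Finset.mem_range] at hl; omega), mul_zero]

lemma Leg_eq (h : ℝ) (k : ℕ) (s : ℝ) : LegendreShifted h k s = Ptil k ((s + h) / h) := by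
  unfold LegendreShifted Ptil
  rw [Finset.mul_sum]
  apply Finset.sum_congr rfl
  intro l _
  rw [pow_add]
  ring

lemma Leg_cont (h : ℝ) (k : ℕ) : Continuous (LegendreShifted h k) := by
  have : LegendreShifted h k = fun s => Ptil k ((s + h) / h) := funext (Leg_eq h k)
  rw [this]
  exact (Ptil_continuous k).comp ((continuous_id.add continuous_const).div_const h)

lemma ortho01' (j k : ℕ) :
    ∫ t in (0:ℝ)..1, Ptil j t * Ptil k t = if j = k then 1/(2*(k:ℝ)+1) else 0 := by
  rcases le_total j k with hjk | hkj
  · exact ortho01 j k hjk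
  · simp_rw [mul_comm (Ptil j _) (Ptil k _)]
    rw [ortho01 k j hkj]
    rcases eq_or_ne j k with rfl | hne
    · simp
    · rw [if_neg (fun hh => hne hh.symm), if_neg hne]

lemma Leg_ortho {h : ℝ} (hh : 0 < h) (j k : ℕ) :
    ∫ s in (-h)..0, LegendreShifted h j s * LegendreShifted h k s
      = if j = k then h/(2*(k:ℝ)+1) else 0 := by
  have hne : (1/h) ≠ 0 := by positivity
  have hrw : ∀ s : ℝ, LegendreShifted h j s * LegendreShifted h k s
      = (fun t => Ptil j t * Ptil k t) ((1/h) * s + 1) := by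
    intro s
    simp only [Leg_eq]
    have : (s + h)/h = (1/h) * s + 1 := by field_simp
    rw [this]
  simp_rw [hrw]
  rw [intervalIntegral.integral_comp_mul_add (fun t => Ptil j t * Ptil k t) hne 1]
  rw [show (1/h) * (-h) + 1 = 0 by field_simp; ring, show (1/h) * 0 + 1 = 1 by ring]
  rw [ortho01' j k]
  rcases eq_or_ne j k with rfl | hne2
  · simp only [if_pos rfl, smul_eq_mul, if_true]
    rw [one_div]
    field_simp
  · simp [hne2]

lemma bessel_scalar {h : ℝ} (hh : 0 < h) (N : ℕ) (φ : ℝ → ℝ)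
    (hφ : ContinuousOn φ (Icc (-h) 0)) :
    ∑ j ∈ Finset.range (N+1), ((2*(j:ℝ)+1)/h) * (∫ s in (-h)..0, LegendreShifted h j s * φ s)^2
      ≤ ∫ s in (-h)..0, φ s ^ 2 := by
  have hle : (-h : ℝ) ≤ 0 := by linarith
  have huIcc : uIcc (-h) (0:ℝ) = Icc (-h) 0 := uIcc_of_le hle
  set a : ℕ → ℝ := fun j => ∫ s in (-h)..0, LegendreShifted h j s * φ s with ha
  set b : ℕ → ℝ := fun j => ((2*(j:ℝ)+1)/h) * a j with hb
  set P : ℝ → ℝ := fun s => ∑ j ∈ Finset.range (N+1), b j * LegendreShifted h j s with hP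
  have hPc : Continuous P := continuous_finset_sum _ fun j _ =>
    continuous_const.mul (Leg_cont h j)
  have hint1 : ∀ j : ℕ, IntervalIntegrable (fun s => LegendreShifted h j s * φ s)
      MeasureTheory.volume (-h) 0 :=
    fun j => (((Leg_cont h j).continuousOn.mul hφ)).intervalIntegrable_of_Icc hle
  have hint2 : IntervalIntegrable (fun s => φ s ^ 2) MeasureTheory.volume (-h) 0 :=
    (hφ.pow 2).intervalIntegrable_of_Icc hle
  have hintφP : IntervalIntegrable (fun s => φ s * P s) MeasureTheory.volume (-h) 0 :=
    (hφ.mul hPc.continuousOn).intervalIntegrable_of_Icc hle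
  have hintPP : IntervalIntegrable (fun s => P s ^ 2) MeasureTheory.volume (-h) 0 :=
    ((hPc.pow 2).continuousOn).intervalIntegrable_of_Icc hle
  -- ∫ φ P
  have hφP : ∫ s in (-h)..0, φ s * P s = ∑ j ∈ Finset.range (N+1), b j * a j := by
    have hpt : ∀ s : ℝ, φ s * P s
        = ∑ j ∈ Finset.range (N+1), b j * (LegendreShifted h j s * φ s) := by
      intro s; rw [hP]; simp only [Finset.mul_sum]
      exact Finset.sum_congr rfl fun j _ => by ring
    simp_rw [hpt]
    rw [intervalIntegral.integral_finset_sum (fun j _ => (hint1 j).const_mul (b j))]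
    exact Finset.sum_congr rfl fun j _ => intervalIntegral.integral_const_mul _ _
  -- ∫ P²
  have hPP : ∫ s in (-h)..0, P s ^ 2
      = ∑ j ∈ Finset.range (N+1), b j * b j * (h/(2*(j:ℝ)+1)) := by
    have hpt : ∀ s : ℝ, P s ^ 2 = ∑ j ∈ Finset.range (N+1), ∑ k ∈ Finset.range (N+1),
        (b j * b k) * (LegendreShifted h j s * LegendreShifted h k s) := by
      intro s; rw [hP, sq, Finset.sum_mul_sum]
      exact Finset.sum_congr rfl fun j _ => Finset.sum_congr rfl fun k _ => by ring
    simp_rw [hpt]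
    rw [intervalIntegral.integral_finset_sum (f := fun j s => ∑ k ∈ Finset.range (N+1),
        (b j * b k) * (LegendreShifted h j s * LegendreShifted h k s)) (fun j _ =>
      ((continuous_finset_sum _ fun k _ => continuous_const.mul
        ((Leg_cont h j).mul (Leg_cont h k))).continuousOn).intervalIntegrable_of_Icc hle)]
    apply Finset.sum_congr rfl
    intro j hj
    rw [intervalIntegral.integral_finset_sum
      (f := fun k s => (b j * b k) * (LegendreShifted h j s * LegendreShifted h k s)) (fun k _ =>
      ((((Leg_cont h j).mul (Leg_cont h k)).continuousOn).intervalIntegrable_of_Icc hle).const_mul _)]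
    have : ∀ k ∈ Finset.range (N+1), (∫ s in (-h)..0,
        (b j * b k) * (LegendreShifted h j s * LegendreShifted h k s))
        = if j = k then b j * b k * (h/(2*(k:ℝ)+1)) else 0 := by
      intro k _
      rw [intervalIntegral.integral_const_mul, Leg_ortho hh j k]
      split_ifs <;> simp
    rw [Finset.sum_congr rfl this, Finset.sum_ite_eq]
    rw [if_pos hj]
  -- expand square
  have hsq : 0 ≤ ∫ s in (-h)..0, (φ s - P s)^2 :=
    intervalIntegral.integral_nonneg hle (fun s _ => sq_nonneg _)
  have hexp : ∫ s in (-h)..0, (φ s - P s)^2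
      = (∫ s in (-h)..0, φ s ^ 2) - (2 * (∫ s in (-h)..0, φ s * P s)
          - ∫ s in (-h)..0, P s ^ 2) := by
    have hpt : ∀ s : ℝ, (φ s - P s)^2 = φ s ^ 2 - (2 * (φ s * P s) - P s ^ 2) := by
      intro s; ring
    simp_rw [hpt]
    rw [intervalIntegral.integral_sub hint2 ((hintφP.const_mul 2).sub hintPP),
      intervalIntegral.integral_sub (hintφP.const_mul 2) hintPP,
      intervalIntegral.integral_const_mul]
  rw [hexp, hφP, hPP] at hsq
  have hfin : ∑ j ∈ Finset.range (N+1), ((2*(j:ℝ)+1)/h) * (a j)^2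
      = ∑ j ∈ Finset.range (N+1), (2 * (b j * a j) - b j * b j * (h/(2*(j:ℝ)+1))) := by
    apply Finset.sum_congr rfl
    intro j _
    rw [hb]
    have h1 : (2*(j:ℝ)+1) ≠ 0 := by positivity
    field_simp
    ring
  rw [hfin]
  rw [Finset.sum_sub_distrib, ← Finset.mul_sum]
  linarith

/-- Weighted Bessel–Legendre integral inequality:
`∫_{−h}^0 e^{2αs} g(s)ᵀ R g(s) ds ≥ (e^{−2αh}/h) Σ_{j=0}^N (2j+1) Ω_jᵀ R Ω_j`,
where `Ω_j = ∫_{−h}^0 L_j(s) g(s) ds`. -/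
theorem weighted_bessel_legendre_inequality
    (n N : ℕ) (h α : ℝ) (hh : 0 < h) (hα : 0 ≤ α)
    (R : Matrix (Fin n) (Fin n) ℝ) (hR : R.PosSemidef)
    (g : ℝ → (Fin n → ℝ)) (hg : ContinuousOn g (Icc (-h) 0)) :
    (Real.exp (-(2 * α * h)) / h) * ∑ j ∈ Finset.range (N + 1), (2 * (j : ℝ) + 1) *
        ((∫ s in (-h)..0, LegendreShifted h j s • g s) ⬝ᵥ
          R.mulVec (∫ s in (-h)..0, LegendreShifted h j s • g s))
      ≤ ∫ s in (-h)..0, Real.exp (2 * α * s) * (g s ⬝ᵥ R.mulVec (g s)) := by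
  have hle : (-h : ℝ) ≤ 0 := by linarith
  obtain ⟨C, hCC, hCsymm⟩ : ∃ C : Matrix (Fin n) (Fin n) ℝ, C * C = R ∧ Cᵀ = C := by
    open scoped MatrixOrder in
    exact ⟨CFC.sqrt R, CFC.sqrt_mul_sqrt_self R hR.nonneg, by
      have := (CFC.sqrt_nonneg R).posSemidef.1
      simpa [Matrix.IsHermitian, Matrix.conjTranspose_eq_transpose_of_trivial] using this⟩
  -- quadratic form identity
  have hquad : ∀ x : Fin n → ℝ, x ⬝ᵥ R.mulVec x = ∑ i, (C.mulVec x i)^2 := by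
    intro x
    rw [← hCC, ← Matrix.mulVec_mulVec, Matrix.dotProduct_mulVec, ← Matrix.mulVec_transpose,
      hCsymm]
    simp [dotProduct, sq]
  -- components of g
  have hgi : ∀ m : Fin n, ContinuousOn (fun s => g s m) (Icc (-h) 0) :=
    fun m => (continuous_apply m).comp_continuousOn hg
  set φ : Fin n → ℝ → ℝ := fun i s => C.mulVec (g s) i with hφdef
  have hφc : ∀ i, ContinuousOn (φ i) (Icc (-h) 0) := by
    intro i
    have hφeq : φ i = fun s => ∑ m, C i m * g s m := by
      funext s; simp [hφdef, Matrix.mulVec, dotProduct]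
    rw [hφeq]
    exact continuousOn_finset_sum _ fun m _ => continuousOn_const.mul (hgi m)
  -- components of Ω j
  have hΩ : ∀ (j : ℕ) (m : Fin n),
      (∫ s in (-h)..0, LegendreShifted h j s • g s) m
        = ∫ s in (-h)..0, LegendreShifted h j s * g s m := by
    intro j m
    have hint : IntervalIntegrable (fun s => LegendreShifted h j s • g s)
        MeasureTheory.volume (-h) 0 :=
      ((Leg_cont h j).continuousOn.smul hg).intervalIntegrable_of_Icc hle
    have := (ContinuousLinearMap.proj (R := ℝ) (φ := fun _ : Fin n => ℝ) m
      ).intervalIntegral_comp_comm hint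
    simpa [ContinuousLinearMap.proj_apply, Pi.smul_apply, smul_eq_mul] using this.symm
  -- a i j = (C Ω_j) i
  have ha : ∀ (i : Fin n) (j : ℕ),
      C.mulVec (∫ s in (-h)..0, LegendreShifted h j s • g s) i
        = ∫ s in (-h)..0, LegendreShifted h j s * φ i s := by
    intro i j
    rw [Matrix.mulVec]
    show ∑ m, C i m * (∫ s in (-h)..0, LegendreShifted h j s • g s) m = _
    have hpt : ∀ s : ℝ, LegendreShifted h j s * φ i s
        = ∑ m, C i m * (LegendreShifted h j s * g s m) := by
      intro s
      simp only [hφdef, Matrix.mulVec, dotProduct, Finset.mul_sum]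
      exact Finset.sum_congr rfl fun m _ => by ring
    simp_rw [hpt, hΩ]
    rw [intervalIntegral.integral_finset_sum
      (f := fun m s => C i m * (LegendreShifted h j s * g s m)) (fun m _ =>
      (((Leg_cont h j).continuousOn.mul (hgi m)).intervalIntegrable_of_Icc hle).const_mul _)]
    exact Finset.sum_congr rfl fun m _ => (intervalIntegral.integral_const_mul _ _).symm
  -- notation
  set Ω : ℕ → (Fin n → ℝ) := fun j => ∫ s in (-h)..0, LegendreShifted h j s • g s with hΩdef
  have hΩR : ∀ j : ℕ, Ω j ⬝ᵥ R.mulVec (Ω j)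
      = ∑ i, (∫ s in (-h)..0, LegendreShifted h j s * φ i s)^2 := by
    intro j
    rw [hquad]
    exact Finset.sum_congr rfl fun i _ => by rw [ha i j]
  -- ∫ gRg = Σ_i ∫ φ_i²
  have hgRg_pt : ∀ s : ℝ, g s ⬝ᵥ R.mulVec (g s) = ∑ i, φ i s ^ 2 := fun s => hquad (g s)
  set S : ℝ := ∫ s in (-h)..0, g s ⬝ᵥ R.mulVec (g s) with hSdef
  have hS : S = ∑ i, ∫ s in (-h)..0, φ i s ^ 2 := by
    rw [hSdef]
    simp_rw [hgRg_pt]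
    exact intervalIntegral.integral_finset_sum (fun i _ =>
      ((hφc i).pow 2).intervalIntegrable_of_Icc hle)
  -- Bessel summed over coordinates
  have hbesselS : ∑ j ∈ Finset.range (N+1), ((2*(j:ℝ)+1)/h) * (Ω j ⬝ᵥ R.mulVec (Ω j)) ≤ S := by
    rw [hS]
    have : ∑ j ∈ Finset.range (N+1), ((2*(j:ℝ)+1)/h) * (Ω j ⬝ᵥ R.mulVec (Ω j))
        = ∑ i, ∑ j ∈ Finset.range (N+1),
            ((2*(j:ℝ)+1)/h) * (∫ s in (-h)..0, LegendreShifted h j s * φ i s)^2 := by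
      simp_rw [hΩR, Finset.mul_sum]
      rw [Finset.sum_comm]
    rw [this]
    exact Finset.sum_le_sum fun i _ => bessel_scalar hh N (φ i) (hφc i)
  -- weight step
  have hgRg_nonneg : ∀ s : ℝ, 0 ≤ g s ⬝ᵥ R.mulVec (g s) := by
    intro s
    rw [hgRg_pt]
    exact Finset.sum_nonneg fun i _ => sq_nonneg _
  have hgRg_cont : ContinuousOn (fun s => g s ⬝ᵥ R.mulVec (g s)) (Icc (-h) 0) := by
    have : (fun s => g s ⬝ᵥ R.mulVec (g s)) = fun s => ∑ i, φ i s ^ 2 := funext hgRg_pt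
    rw [this]
    exact continuousOn_finset_sum _ fun i _ => (hφc i).pow 2
  have hw : Real.exp (-(2*α*h)) * S ≤ ∫ s in (-h)..0, Real.exp (2*α*s) * (g s ⬝ᵥ R.mulVec (g s)) := by
    have heq : Real.exp (-(2*α*h)) * S
        = ∫ s in (-h)..0, Real.exp (-(2*α*h)) * (g s ⬝ᵥ R.mulVec (g s)) := by
      rw [hSdef, intervalIntegral.integral_const_mul]
    rw [heq]
    apply intervalIntegral.integral_mono_on hle
    · exact (hgRg_cont.const_smul (Real.exp (-(2*α*h)))).intervalIntegrable_of_Icc hle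
    · exact ((Real.continuous_exp.comp (continuous_const.mul continuous_id)).continuousOn.mul
        hgRg_cont).intervalIntegrable_of_Icc hle
    · intro s hs
      apply mul_le_mul_of_nonneg_right _ (hgRg_nonneg s)
      apply Real.exp_le_exp.mpr
      rcases hs with ⟨hs1, hs2⟩
      nlinarith
  -- conclude
  have hfact : (Real.exp (-(2 * α * h)) / h) * ∑ j ∈ Finset.range (N + 1), (2 * (j : ℝ) + 1) *
        (Ω j ⬝ᵥ R.mulVec (Ω j))
      = Real.exp (-(2*α*h)) * ∑ j ∈ Finset.range (N+1),
          ((2*(j:ℝ)+1)/h) * (Ω j ⬝ᵥ R.mulVec (Ω j)) := by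
    rw [Finset.mul_sum, Finset.mul_sum]
    exact Finset.sum_congr rfl fun j _ => by ring
  calc (Real.exp (-(2 * α * h)) / h) * ∑ j ∈ Finset.range (N + 1), (2 * (j : ℝ) + 1) *
        (Ω j ⬝ᵥ R.mulVec (Ω j))
      = Real.exp (-(2*α*h)) * ∑ j ∈ Finset.range (N+1),
          ((2*(j:ℝ)+1)/h) * (Ω j ⬝ᵥ R.mulVec (Ω j)) := hfact
    _ ≤ Real.exp (-(2*α*h)) * S := by
        apply mul_le_mul_of_nonneg_left hbesselS (Real.exp_nonneg _)
    _ ≤ _ := hw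

end Aux
end

section
/- (Single-interval contraction via a looped functional) Let α > 0, η ≥ 0, T > 0, and let V, 𝒱 : [0,T] → ℝ be functions such that: (i) the map σ ↦ e^{2ασ}( V(σ) + 𝒱(σ) ) is nonincreasing on [0,T]; (ii) e^{2αT} 𝒱(T) = 𝒱(0); (iii) 𝒱(0) ≤ η V(0); (iv) −η V(0) ≤ e^{2ατ} 𝒱(τ) for all τ ∈ [0,T]. Then V(τ) ≤ (1 + 2η) e^{−2ατ} V(0) for all τ ∈ [0,T], and V(T) ≤ e^{−2αT} V(0). -/
open Set

/-- Single-interval contraction via a looped functional: if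
`σ ↦ e^{2ασ}(V(σ) + 𝒱(σ))` is nonincreasing on `[0,T]`, `e^{2αT}𝒱(T) = 𝒱(0)`,
`𝒱(0) ≤ η V(0)` and `−η V(0) ≤ e^{2ατ}𝒱(τ)` on `[0,T]`, then
`V(τ) ≤ (1+2η)e^{−2ατ}V(0)` on `[0,T]` and `V(T) ≤ e^{−2αT}V(0)`. -/
theorem single_interval_contraction (α η T : ℝ) (hα : 0 < α) (hη : 0 ≤ η) (hT : 0 < T)
    (V 𝒱 : ℝ → ℝ)
    (hmono : AntitoneOn (fun σ => Real.exp (2 * α * σ) * (V σ + 𝒱 σ)) (Icc 0 T))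
    (hloop : Real.exp (2 * α * T) * 𝒱 T = 𝒱 0)
    (h0 : 𝒱 0 ≤ η * V 0)
    (hlow : ∀ τ ∈ Icc 0 T, -(η * V 0) ≤ Real.exp (2 * α * τ) * 𝒱 τ) :
    (∀ τ ∈ Icc 0 T, V τ ≤ (1 + 2 * η) * Real.exp (-(2 * α * τ)) * V 0) ∧
      V T ≤ Real.exp (-(2 * α * T)) * V 0 := by
  have h0mem : (0 : ℝ) ∈ Icc 0 T := ⟨le_refl 0, hT.le⟩
  constructor
  · intro τ hτ
    have hm := hmono h0mem hτ hτ.1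
    simp only [mul_zero, Real.exp_zero, one_mul] at hm
    have hl := hlow τ hτ
    have key : Real.exp (2 * α * τ) * V τ ≤ (1 + 2 * η) * V 0 := by nlinarith
    have hpos : 0 < Real.exp (2 * α * τ) := Real.exp_pos _
    rw [Real.exp_neg]
    rw [← sub_nonneg]
    rw [← sub_nonneg] at key
    have : (1 + 2 * η) * (Real.exp (2 * α * τ))⁻¹ * V 0 - V τ
        = ((1 + 2 * η) * V 0 - Real.exp (2 * α * τ) * V τ) * (Real.exp (2 * α * τ))⁻¹ := by
      field_simp
    rw [this]
    positivity
  · have hm := hmono h0mem ⟨hT.le, le_refl T⟩ hT.le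
    simp only [mul_zero, Real.exp_zero, one_mul] at hm
    have key : Real.exp (2 * α * T) * V T ≤ V 0 := by nlinarith
    have hpos : 0 < Real.exp (2 * α * T) := Real.exp_pos _
    rw [Real.exp_neg, ← sub_nonneg]
    have : (Real.exp (2 * α * T))⁻¹ * V 0 - V T
        = (V 0 - Real.exp (2 * α * T) * V T) * (Real.exp (2 * α * T))⁻¹ := by
      field_simp
    rw [this]
    have := sub_nonneg.mpr key
    positivity
end
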